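/- arXiv:1510.00078 — 6 statements merged into one kernel-verified Lean document; each statement's English description precedes it below -/
import Mathlib

section
/- For every function c from the 2-element subsets of ω^k + 1 to {red, blue}, there is either a red-homogeneous subset order-homeomorphic to ω+1 (i.e., order-isomorphic to ω+1 and closed in its supremum) or a blue-homogeneous set of k+1 points. In symbols: ω^k + 1 →_cl (ω+1, k+1)². -/
open Ordinal Set

noncomputable section

instance : TopologicalSpace Ordinal := Preorder.topology Ordinal
instance : OrderTopology Ordinal := ⟨rfl⟩

/-- `X` is order-isomorphic to the ordinal `a`. -/
def IsOrderCopy (X : Set Ordinal) (a : Ordinal) : Prop :=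
  Nonempty (X ≃o (Iio a))

/-- `X` is order-isomorphic to the ordinal `a` and closed in its supremum. -/
def IsClosedCopy (X : Set Ordinal) (a : Ordinal) : Prop :=
  IsOrderCopy X a ∧ ∀ S ⊆ X, S.Nonempty → sSup S < sSup X → sSup S ∈ X

/-- `X` is homeomorphic to the ordinal `a` with its order topology. -/
def IsTopCopy (X : Set Ordinal) (a : Ordinal) : Prop :=
  Nonempty (X ≃ₜ (Iio a))

/-- `X` is homogeneous for color `b` (red = `true`, blue = `false`):
every pair from `X` gets color `b`. -/
def Homog (c : Ordinal → Ordinal → Bool) (b : Bool) (X : Set Ordinal) : Prop :=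
  ∀ x ∈ X, ∀ y ∈ X, x < y → c x y = b

/-- There is a blue-homogeneous set of `m` points inside `β`. -/
def BlueSet (c : Ordinal → Ordinal → Bool) (β : Ordinal) (m : ℕ) : Prop :=
  ∃ H : Finset Ordinal, (H : Set Ordinal) ⊆ Iio β ∧ H.card = m ∧ Homog c false (H : Set Ordinal)

/-- The closed partition relation `β →_cl (a, m)²`. -/
def ToClosed2 (β a : Ordinal) (m : ℕ) : Prop :=
  ∀ c : Ordinal → Ordinal → Bool,
    (∃ X ⊆ Iio β, IsClosedCopy X a ∧ Homog c true X) ∨ BlueSet c β m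

/-- The topological partition relation `β →_top (a, m)²`. -/
def ToTop2 (β a : Ordinal) (m : ℕ) : Prop :=
  ∀ c : Ordinal → Ordinal → Bool,
    (∃ X ⊆ Iio β, IsTopCopy X a ∧ Homog c true X) ∨ BlueSet c β m

/-- The classical partition relation `β → (a, m)²`. -/
def ToPlain2 (β a : Ordinal) (m : ℕ) : Prop :=
  ∀ c : Ordinal → Ordinal → Bool,
    (∃ X ⊆ Iio β, IsOrderCopy X a ∧ Homog c true X) ∨ BlueSet c β m

/-- The closed pigeonhole relation `β →_cl (a)¹_k`. -/
def ToClosed1 (β a : Ordinal) (k : ℕ) : Prop :=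
  ∀ c : Ordinal → Fin k, ∃ i, ∃ X ⊆ Iio β, (∀ x ∈ X, c x = i) ∧ IsClosedCopy X a

/-- The topological pigeonhole relation `β →_top (a)¹_k`. -/
def ToTop1 (β a : Ordinal) (k : ℕ) : Prop :=
  ∀ c : Ordinal → Fin k, ∃ i, ∃ X ⊆ Iio β, (∀ x ∈ X, c x = i) ∧ IsTopCopy X a

/-- The classical pigeonhole relation `β → (a)¹_k`. -/
def ToPlain1 (β a : Ordinal) (k : ℕ) : Prop :=
  ∀ c : Ordinal → Fin k, ∃ i, ∃ X ⊆ Iio β, (∀ x ∈ X, c x = i) ∧ IsOrderCopy X a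

/-- The closed ordinal Ramsey number `R^cl(a, m)`. -/
def Rcl (a : Ordinal) (m : ℕ) : Ordinal := sInf {β | ToClosed2 β a m}

/-- The topological ordinal Ramsey number `R^top(a, m)`. -/
def Rtop (a : Ordinal) (m : ℕ) : Ordinal := sInf {β | ToTop2 β a m}

/-- The classical pigeonhole number `P(a)_k`. -/
def Pplain (a : Ordinal) (k : ℕ) : Ordinal := sInf {β | ToPlain1 β a k}

/-- The closed pigeonhole number `P^cl(a)_k`. -/
def PclK (a : Ordinal) (k : ℕ) : Ordinal := sInf {β | ToClosed1 β a k}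


open Classical in
private noncomputable def rCol (c : ℕ → ℕ → Bool) (S : Set ℕ) : Bool :=
  if {y ∈ S | sInf S < y ∧ c (sInf S) y = true}.Infinite then true else false

private noncomputable def rNext (c : ℕ → ℕ → Bool) (S : Set ℕ) : Set ℕ :=
  {y ∈ S | sInf S < y ∧ c (sInf S) y = rCol c S}

private lemma rNext_infinite (c : ℕ → ℕ → Bool) {S : Set ℕ} (hS : S.Infinite) :
    (rNext c S).Infinite := by
  classical
  by_cases h : {y ∈ S | sInf S < y ∧ c (sInf S) y = true}.Infinite
  · have : rNext c S = {y ∈ S | sInf S < y ∧ c (sInf S) y = true} := by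
      simp only [rNext, rCol, if_pos h]
    rw [this]; exact h
  · have h2 : {y ∈ S | sInf S < y}.Infinite := by
      have he : {y ∈ S | sInf S < y} = S \ Set.Iic (sInf S) := by
        ext y; simp [not_le]
      rw [he]; exact hS.diff (Set.finite_Iic _)
    have he2 : {y ∈ S | sInf S < y ∧ c (sInf S) y = false} =
        {y ∈ S | sInf S < y} \ {y ∈ S | sInf S < y ∧ c (sInf S) y = true} := by
      ext y
      simp only [Set.mem_sep_iff, Set.mem_diff]
      constructor
      · rintro ⟨h1, h2, h3⟩
        exact ⟨⟨h1, h2⟩, fun hh => by simp [h3] at hh⟩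
      · rintro ⟨⟨h1, h2⟩, h3⟩
        refine ⟨h1, h2, ?_⟩
        cases hcv : c (sInf S) y
        · rfl
        · exact absurd ⟨h1, h2, hcv⟩ h3
    have hinf : {y ∈ S | sInf S < y ∧ c (sInf S) y = false}.Infinite := by
      rw [he2]; exact h2.diff (Set.not_infinite.mp h)
    have : rNext c S = {y ∈ S | sInf S < y ∧ c (sInf S) y = false} := by
      simp only [rNext, rCol, if_neg h]
    rw [this]; exact hinf

private noncomputable def rSeq (c : ℕ → ℕ → Bool) : ℕ → Set ℕ
  | 0 => Set.univ
  | n + 1 => rNext c (rSeq c n)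

private lemma rSeq_infinite (c : ℕ → ℕ → Bool) : ∀ n, (rSeq c n).Infinite
  | 0 => Set.infinite_univ
  | n + 1 => rNext_infinite c (rSeq_infinite c n)

private lemma rSeq_antitone (c : ℕ → ℕ → Bool) : Antitone (rSeq c) :=
  antitone_nat_of_succ_le (fun _ _ hy => hy.1)

theorem ramsey2 (c : ℕ → ℕ → Bool) :
    ∃ (b : Bool) (g : ℕ → ℕ), StrictMono g ∧ ∀ i j, i < j → c (g i) (g j) = b := by
  classical
  set x : ℕ → ℕ := fun n => sInf (rSeq c n) with hxdef
  set d : ℕ → Bool := fun n => rCol c (rSeq c n) with hddef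
  have key : ∀ {n m : ℕ}, n < m → x n < x m ∧ c (x n) (x m) = d n := by
    intro n m hnm
    have hmem : x m ∈ rSeq c m := Nat.sInf_mem (rSeq_infinite c m).nonempty
    have hsub : rSeq c m ⊆ rSeq c (n + 1) := rSeq_antitone c (Nat.succ_le_of_lt hnm)
    have hx2 : x m ∈ rNext c (rSeq c n) := hsub hmem
    exact ⟨hx2.2.1, hx2.2.2⟩
  have hex : ∃ b, {n | d n = b}.Infinite := by
    by_contra hcon
    push_neg at hcon
    have h1 : {n | d n = true}.Finite := hcon true
    have h2 : {n | d n = false}.Finite := hcon false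
    have : (Set.univ : Set ℕ).Finite := by
      refine (h1.union h2).subset ?_
      intro n _
      cases h : d n
      · exact Or.inr h
      · exact Or.inl h
    exact Set.infinite_univ this
  obtain ⟨b, hb⟩ := hex
  refine ⟨b, fun i => x (Nat.nth (fun n => d n = b) i), ?_, ?_⟩
  · exact fun i j hij => (key ((Nat.nth_strictMono hb) hij)).1
  · intro i j hij
    have h1 := key ((Nat.nth_strictMono hb) hij)
    have h2 : d (Nat.nth (fun n => d n = b) i) = b := Nat.nth_mem_of_infinite hb i
    rw [h1.2, h2]

lemma ord_sSup_image_add (γ : Ordinal) {S : Set Ordinal} (hne : S.Nonempty) (hbd : BddAbove S) :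
    sSup ((fun a => γ + a) '' S) = γ + sSup S := by
  have hbd' : BddAbove ((fun a => γ + a) '' S) := by
    obtain ⟨u, hu⟩ := hbd
    exact ⟨γ + u, by rintro _ ⟨a, ha, rfl⟩; exact add_le_add_right (hu ha) γ⟩
  apply le_antisymm
  · apply csSup_le (hne.image _)
    rintro _ ⟨a, ha, rfl⟩
    exact add_le_add_right (le_csSup hbd ha) γ
  · rcases em (sSup S ∈ S) with h | h
    · exact le_csSup hbd' ⟨_, h, rfl⟩
    · have hlim : Order.IsSuccLimit (sSup S) := by
        rcases Ordinal.zero_or_succ_or_isSuccLimit (sSup S) with h0 | ⟨a, ha⟩ | hl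
        · exfalso
          apply h
          obtain ⟨s, hs⟩ := hne
          have hle : s ≤ sSup S := le_csSup hbd hs
          rw [h0] at hle ⊢
          rwa [nonpos_iff_eq_zero.mp hle] at hs
        · exfalso
          have hlt : a < sSup S := by rw [← ha]; exact Order.lt_succ a
          obtain ⟨s, hs, has⟩ := exists_lt_of_lt_csSup hne hlt
          have h1 : s ≤ sSup S := le_csSup hbd hs
          have h2 : sSup S ≤ s := by rw [← ha]; exact Order.succ_le_of_lt has
          rw [← le_antisymm h1 h2] at h
          exact h hs
        · exact hl
      rw [Ordinal.add_le_iff_of_isSuccLimit hlim]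
      intro b' hb'
      obtain ⟨s, hs, hbs⟩ := exists_lt_of_lt_csSup hne hb'
      exact le_trans (add_le_add_right hbs.le γ) (le_csSup hbd' ⟨_, hs, rfl⟩)

lemma isClosedCopy_seq (y : ℕ → Ordinal) (hy : StrictMono y) (t : Ordinal)
    (hlt : ∀ n, y n < t) (hsup : sSup (Set.range y) = t) :
    IsClosedCopy (Set.range y ∪ {t}) (ω + 1) := by
  classical
  have homega : (ω : Ordinal) < ω + 1 := by
    rw [Ordinal.add_one_eq_succ]; exact Order.lt_succ ω
  have hmemt : t ∈ Set.range y ∪ {t} := Or.inr rfl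
  have hmemy : ∀ n, y n ∈ Set.range y ∪ {t} := fun n => Or.inl ⟨n, rfl⟩
  constructor
  · -- order copy
    set X : Set Ordinal := Set.range y ∪ {t} with hXdef
    let F : (Iio (ω + 1) : Set Ordinal) → X := fun o =>
      if h : o.1 < ω then ⟨y (Ordinal.lt_omega0.mp h).choose, hmemy _⟩ else ⟨t, hmemt⟩
    have hFmono : StrictMono F := by
      intro o1 o2 h12
      by_cases h1 : o1.1 < ω
      · by_cases h2 : o2.1 < ω
        · have hs1 := (Ordinal.lt_omega0.mp h1).choose_spec
          have hs2 := (Ordinal.lt_omega0.mp h2).choose_spec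
          have hlt' : ((Ordinal.lt_omega0.mp h1).choose : Ordinal) <
              ((Ordinal.lt_omega0.mp h2).choose : Ordinal) := by
            rw [← hs1, ← hs2]; exact h12
          have : (Ordinal.lt_omega0.mp h1).choose < (Ordinal.lt_omega0.mp h2).choose :=
            Nat.cast_lt.mp hlt'
          simp only [F, dif_pos h1, dif_pos h2]
          exact Subtype.mk_lt_mk.mpr (hy this)
        · simp only [F, dif_pos h1, dif_neg h2]
          exact Subtype.mk_lt_mk.mpr (hlt _)
      · exfalso
        have hle2 : o2.1 ≤ ω := by
          have h2' : o2.1 < Order.succ ω := by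
            rw [← Ordinal.add_one_eq_succ]; exact o2.2
          exact Order.lt_succ_iff.mp h2'
        exact h1 (lt_of_lt_of_le (Subtype.coe_lt_coe.mpr h12) hle2)
    have hFsurj : Function.Surjective F := by
      rintro ⟨z, hz⟩
      rcases hz with ⟨n, rfl⟩ | rfl
      · refine ⟨⟨(n : Ordinal), ?_⟩, ?_⟩
        · exact Set.mem_Iio.mpr ((nat_lt_omega0 n).trans homega)
        · have hn : ((n : Ordinal)) < ω := nat_lt_omega0 n
          have hs := (Ordinal.lt_omega0.mp hn).choose_spec
          have : (Ordinal.lt_omega0.mp hn).choose = n := by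
            exact_mod_cast hs.symm
          simp only [F, dif_pos hn]
          exact Subtype.ext (by rw [this])
      · refine ⟨⟨ω, Set.mem_Iio.mpr homega⟩, ?_⟩
        simp only [F, dif_neg (lt_irrefl ω)]
    exact ⟨(StrictMono.orderIsoOfSurjective F hFmono hFsurj).symm⟩
  · -- closed
    intro S hS hne hltS
    have hbX : BddAbove (Set.range y ∪ {t}) := by
      refine ⟨t, ?_⟩
      rintro z (⟨n, rfl⟩ | rfl)
      · exact (hlt n).le
      · exact le_rfl
    have hsupX : sSup (Set.range y ∪ {t}) = t := by
      apply le_antisymm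
      · apply csSup_le ⟨t, hmemt⟩
        rintro z (⟨n, rfl⟩ | rfl)
        · exact (hlt n).le
        · exact le_rfl
      · exact le_csSup hbX hmemt
    rw [hsupX] at hltS
    have hbS : BddAbove S := hbX.mono hS
    have hexN : ∃ N, sSup S < y N := by
      by_contra hcon
      push_neg at hcon
      have : t ≤ sSup S := by
        rw [← hsup]
        apply csSup_le (Set.range_nonempty y)
        rintro z ⟨n, rfl⟩
        exact hcon n
      exact absurd hltS this.not_gt
    obtain ⟨N, hN⟩ := hexN
    have hfin : S.Finite := by
      apply Set.Finite.subset ((Set.finite_Iio N).image y)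
      intro s hs
      have hsle : s ≤ sSup S := le_csSup hbS hs
      rcases hS hs with ⟨m, rfl⟩ | rfl
      · exact ⟨m, hy.lt_iff_lt.mp (lt_of_le_of_lt hsle hN), rfl⟩
      · exact absurd (lt_of_le_of_lt hsle hN) (asymm (hlt N))
    exact hS (hne.csSup_mem hfin)

lemma main_lemma (k : ℕ) : ToClosed2 ((ω : Ordinal) ^ (k : Ordinal) + 1) (ω + 1) (k + 1) := by
  induction k with
  | zero =>
      intro c
      right
      refine ⟨{0}, ?_, ?_, ?_⟩
      · intro x hx
        simp only [Finset.coe_singleton, Set.mem_singleton_iff] at hx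
        subst hx
        exact Set.mem_Iio.mpr (zero_lt_one.trans_le (le_add_self))
      · simp
      · intro x hx y hy hxy
        simp only [Finset.coe_singleton, Set.mem_singleton_iff] at hx hy
        rw [hx, hy] at hxy
        exact absurd hxy (lt_irrefl 0)
  | succ k IH =>
      have hcast : (((k+1 : ℕ)) : Ordinal) = Order.succ ((k : ℕ) : Ordinal) := by
        rw [Nat.cast_succ, Ordinal.add_one_eq_succ]
      rw [hcast, opow_succ]
      set K : Ordinal := ω ^ (k : Ordinal) with hK
      have hKpos : 0 < K := opow_pos _ omega0_pos
      have hμpos : 0 < K * ω := mul_pos hKpos omega0_pos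
      have hKn_lt : ∀ n : ℕ, K * (n : Ordinal) < K * ω :=
        fun n => (isNormal_mul_right hKpos).strictMono (nat_lt_omega0 n)
      have cofin : ∀ β < K * ω, ∃ n : ℕ, β < K * (n : Ordinal) := by
        intro β hβ
        obtain ⟨b', hb', hβ'⟩ := ((isNormal_mul_right hKpos).lt_iff_exists_lt isSuccLimit_omega0).mp hβ
        obtain ⟨n, rfl⟩ := Ordinal.lt_omega0.mp hb'
        exact ⟨n, hβ'⟩
      have hsucc : (K * ω) < K * ω + 1 := by
        rw [Ordinal.add_one_eq_succ]; exact Order.lt_succ _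
      intro c
      by_cases hcof : ∀ β < K * ω, ∃ α, β < α ∧ α < K * ω ∧ c α (K * ω) = true
      · -- A cofinal in K*ω
        choose f hf1 hf2 hf3 using hcof
        let g : ℕ → {o : Ordinal // o < K * ω} := fun n =>
          Nat.rec ⟨f 0 hμpos, hf2 0 hμpos⟩
            (fun n p => ⟨f (max p.1 (K * (n : Ordinal))) (max_lt p.2 (hKn_lt n)),
              hf2 _ _⟩) n
        have hgred : ∀ n, c (g n).1 (K * ω) = true := by
          intro n
          cases n with
          | zero => exact hf3 0 hμpos
          | succ n => exact hf3 _ _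
        have hgstep : ∀ n, max (g n).1 (K * (n : Ordinal)) < (g (n+1)).1 :=
          fun n => hf1 _ _
        have hgmono : StrictMono (fun n => (g n).1) :=
          strictMono_nat_of_lt_succ (fun n => lt_of_le_of_lt (le_max_left _ _) (hgstep n))
        have hgcof : ∀ β < K * ω, ∃ n, β < (g n).1 := by
          intro β hβ
          obtain ⟨n, hn⟩ := cofin β hβ
          exact ⟨n + 1, hn.trans (lt_of_le_of_lt (le_max_right _ _) (hgstep n))⟩
        obtain ⟨b, e, he, hhom⟩ := ramsey2 (fun i j => c (g i).1 (g j).1)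
        set y : ℕ → Ordinal := fun n => (g (e n)).1 with hydef
        have hymono : StrictMono y := fun i j hij => hgmono (he hij)
        have hylt : ∀ n, y n < K * ω := fun n => (g (e n)).2
        cases b with
        | true =>
            left
            have hysup : sSup (Set.range y) = K * ω := by
              apply le_antisymm
              · apply csSup_le (Set.range_nonempty y)
                rintro z ⟨n, rfl⟩
                exact (hylt n).le
              · apply le_of_forall_lt
                intro β hβ
                obtain ⟨n, hn⟩ := hgcof β hβ
                have hle : (g n).1 ≤ y n := hgmono.monotone (he.le_apply)
                exact lt_of_lt_of_le (hn.trans_le hle)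
                  (le_csSup ⟨K * ω, by rintro z ⟨m, rfl⟩; exact (hylt m).le⟩ ⟨n, rfl⟩)
            refine ⟨Set.range y ∪ {K * ω}, ?_, isClosedCopy_seq y hymono _ hylt hysup, ?_⟩
            · rintro z (⟨n, rfl⟩ | rfl)
              · exact Set.mem_Iio.mpr ((hylt n).trans hsucc)
              · exact Set.mem_Iio.mpr hsucc
            · rintro u (⟨i, rfl⟩ | rfl) v (⟨j, rfl⟩ | rfl) huv
              · exact hhom i j (hymono.lt_iff_lt.mp huv)
              · exact hgred (e i)
              · exact absurd (huv.trans (hylt j)) (lt_irrefl _)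
              · exact absurd huv (lt_irrefl _)
        | false =>
            right
            refine ⟨(Finset.range (k + 2)).image y, ?_, ?_, ?_⟩
            · intro z hz
              simp only [Finset.coe_image, Set.mem_image, Finset.mem_coe,
                Finset.mem_range] at hz
              obtain ⟨i, _, rfl⟩ := hz
              exact Set.mem_Iio.mpr ((hylt i).trans hsucc)
            · rw [Finset.card_image_of_injective _ hymono.injective, Finset.card_range]
            · intro u hu v hv huv
              simp only [Finset.coe_image, Set.mem_image, Finset.mem_coe,
                Finset.mem_range] at hu hv
              obtain ⟨i, _, rfl⟩ := hu
              obtain ⟨j, _, rfl⟩ := hv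
              exact hhom i j (hymono.lt_iff_lt.mp huv)
      · -- a tail is blue-connected to K*ω
        push_neg at hcof
        obtain ⟨γ, hγ, hB⟩ := hcof
        have hB' : ∀ α, γ < α → α < K * ω → c α (K * ω) = false := by
          intro α h1 h2
          have := hB α h1 h2
          cases h : c α (K * ω)
          · rfl
          · exact absurd h this
        obtain ⟨n, hγn⟩ := cofin γ hγ
        set γ' : Ordinal := K * (n : Ordinal) with hγ'
        have hKn1 : γ' + K = K * ((n+1 : ℕ) : Ordinal) := by
          rw [Nat.cast_succ, Ordinal.add_one_eq_succ, Ordinal.mul_succ]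
        have htail : ∀ a : Ordinal, a < K + 1 → γ' + a < K * ω := by
          intro a ha
          have hale : a ≤ K := by
            have := ha
            rw [Ordinal.add_one_eq_succ, Order.lt_succ_iff] at this
            exact this
          calc γ' + a ≤ γ' + K := add_le_add_right hale γ'
            _ = K * ((n+1 : ℕ) : Ordinal) := hKn1
            _ < K * ω := hKn_lt (n+1)
        rcases IH (fun a b => c (γ' + a) (γ' + b)) with
          ⟨X', hX'sub, ⟨⟨e'⟩, hclosed'⟩, hhom'⟩ | ⟨H', hH'sub, hH'card, hH'hom⟩
        · -- red closed copy, translate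
          left
          have hX'lt : ∀ a ∈ X', a < K + 1 := fun a ha => Set.mem_Iio.mp (hX'sub ha)
          have hX'ne : X'.Nonempty := by
            have h0 : (0 : Ordinal) ∈ Iio (ω + 1) :=
              Set.mem_Iio.mpr (zero_lt_one.trans_le (le_add_self))
            exact ⟨(e'.symm ⟨0, h0⟩).1, (e'.symm ⟨0, h0⟩).2⟩
          have hX'bd : BddAbove X' := ⟨K + 1, fun a ha => (hX'lt a ha).le⟩
          set X : Set Ordinal := (fun a => γ' + a) '' X' with hXdef
          refine ⟨X, ?_, ⟨?_, ?_⟩, ?_⟩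
          · rintro _ ⟨a, ha, rfl⟩
            exact Set.mem_Iio.mpr ((htail a (hX'lt a ha)).trans hsucc)
          · -- order copy
            let F : X' → X := fun a => ⟨γ' + a.1, Set.mem_image_of_mem _ a.2⟩
            have hFmono : StrictMono F := by
              intro a b hab
              exact Subtype.mk_lt_mk.mpr
                ((add_lt_add_iff_left γ').mpr (Subtype.coe_lt_coe.mpr hab))
            have hFsurj : Function.Surjective F := by
              rintro ⟨z, hz⟩
              obtain ⟨a, ha, rfl⟩ := hz
              exact ⟨⟨a, ha⟩, rfl⟩
            exact ⟨((StrictMono.orderIsoOfSurjective F hFmono hFsurj).symm).trans e'⟩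
          · -- closedness
            intro S hSX hSne hSlt
            set S' : Set Ordinal := {a ∈ X' | γ' + a ∈ S} with hS'def
            have hSS : S = (fun a => γ' + a) '' S' := by
              ext z
              constructor
              · intro hz
                obtain ⟨a, ha, rfl⟩ := hSX hz
                exact ⟨a, ⟨ha, hz⟩, rfl⟩
              · rintro ⟨a, ⟨_, haS⟩, rfl⟩
                exact haS
            have hS'sub : S' ⊆ X' := fun a ha => ha.1
            have hS'bd : BddAbove S' := hX'bd.mono hS'sub
            have hS'ne : S'.Nonempty := by
              obtain ⟨s, hs⟩ := hSne
              obtain ⟨a, ha, rfl⟩ := hSX hs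
              exact ⟨a, ha, hs⟩
            have h1 : sSup S = γ' + sSup S' := by
              rw [hSS, ord_sSup_image_add γ' hS'ne hS'bd]
            have h2 : sSup X = γ' + sSup X' := ord_sSup_image_add γ' hX'ne hX'bd
            rw [h1, h2] at hSlt
            have hlt' : sSup S' < sSup X' := lt_of_add_lt_add_left hSlt
            have := hclosed' S' hS'sub hS'ne hlt'
            rw [h1]
            exact Set.mem_image_of_mem _ this
          · -- red homog
            rintro _ ⟨a, ha, rfl⟩ _ ⟨b, hb, rfl⟩ hab
            exact hhom' a ha b hb ((add_lt_add_iff_left γ').mp hab)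
        · -- blue set, translate and add top
          right
          have hH'lt : ∀ a ∈ H', (a : Ordinal) < K + 1 := by
            intro a ha
            exact Set.mem_Iio.mp (hH'sub (Finset.mem_coe.mpr ha))
          have himg_lt : ∀ z ∈ H'.image (fun a => γ' + a), z < K * ω := by
            intro z hz
            obtain ⟨a, ha, rfl⟩ := Finset.mem_image.mp hz
            exact htail a (hH'lt a ha)
          have hnotmem : K * ω ∉ H'.image (fun a => γ' + a) := by
            intro hmem
            exact absurd (himg_lt _ hmem) (lt_irrefl _)
          refine ⟨insert (K * ω) (H'.image (fun a => γ' + a)), ?_, ?_, ?_⟩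
          · intro z hz
            simp only [Finset.coe_insert, Set.mem_insert_iff, Finset.mem_coe] at hz
            rcases hz with rfl | hz
            · exact Set.mem_Iio.mpr hsucc
            · exact Set.mem_Iio.mpr ((himg_lt z hz).trans hsucc)
          · rw [Finset.card_insert_of_notMem hnotmem,
              Finset.card_image_of_injective _ (fun a b hab =>
                (add_right_inj γ').mp hab), hH'card]
          · intro u hu v hv huv
            simp only [Finset.coe_insert, Set.mem_insert_iff, Finset.mem_coe] at hu hv
            rcases hu with rfl | hu
            · rcases hv with rfl | hv
              · exact absurd huv (lt_irrefl _)
              · exact absurd (huv.trans (himg_lt v hv)) (lt_irrefl _)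
            · obtain ⟨a, ha, rfl⟩ := Finset.mem_image.mp hu
              rcases hv with rfl | hv
              · apply hB' _ _ (htail a (hH'lt a ha))
                exact lt_of_lt_of_le hγn (le_self_add)
              · obtain ⟨b, hb, rfl⟩ := Finset.mem_image.mp hv
                exact hH'hom _ (Finset.mem_coe.mpr ha) _ (Finset.mem_coe.mpr hb)
                  ((add_lt_add_iff_left γ').mp huv)

/-- `ω^k + 1 →_cl (ω+1, k+1)²`. -/
theorem stmt0 (k : ℕ) (hk : 0 < k) :
    ToClosed2 ((ω : Ordinal) ^ (k : Ordinal) + 1) (ω + 1) (k + 1) :=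
  main_lemma k

end
end

section
/- For every positive integer k, ω^k does not satisfy the topological pigeonhole relation for k copies of ω+1: there is a coloring c : ω^k → k such that no color class contains a subspace homeomorphic to ω+1. In particular, coloring each x ∈ ω^k by its Cantor–Bendixson rank gives discrete color classes. -/
open Ordinal Set

noncomputable section

lemma no_top_copy_of_discrete {X : Set Ordinal}
    (h : ∀ x ∈ X, ∃ U : Set Ordinal, IsOpen U ∧ U ∩ X = {x}) :
    ¬ IsTopCopy X (ω + 1) := by
  rintro ⟨e⟩
  have hω : (ω : Ordinal) ∈ Iio ((ω : Ordinal) + 1) := by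
    rw [Ordinal.add_one_eq_succ]; exact Order.lt_succ ω
  set p : ↥(Iio ((ω : Ordinal) + 1)) := ⟨ω, hω⟩ with hp
  set y := e.symm p with hy
  obtain ⟨U, hUopen, hUX⟩ := h y.1 y.2
  have h1 : IsOpen ({y} : Set X) := by
    have heq : ({y} : Set X) = Subtype.val ⁻¹' U := by
      ext z
      simp only [Set.mem_singleton_iff, Set.mem_preimage]
      constructor
      · rintro rfl
        have : y.1 ∈ U ∩ X := hUX ▸ rfl
        exact this.1
      · intro hz
        have : (z : Ordinal) ∈ U ∩ X := ⟨hz, z.2⟩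
        rw [hUX] at this
        exact Subtype.ext this
    rw [heq]
    exact hUopen.preimage continuous_subtype_val
  have h2 : IsOpen (e '' {y}) := e.isOpen_image.2 h1
  have h3 : e '' {y} = {p} := by
    rw [Set.image_singleton, hy, Homeomorph.apply_symm_apply]
  rw [h3] at h2
  obtain ⟨V, hV, hVp⟩ := isOpen_induced_iff.1 h2
  have hωV : (ω : Ordinal) ∈ V := by
    have : p ∈ Subtype.val ⁻¹' V := by rw [hVp]; rfl
    exact this
  obtain ⟨a, ha, hIoo⟩ := (Ordinal.isOpen_iff.1 hV) ω hωV Ordinal.isSuccLimit_omega0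
  have ha1 : a + 1 ∈ Set.Ioo a ω := by
    constructor
    · rw [Ordinal.add_one_eq_succ]; exact Order.lt_succ a
    · rw [Ordinal.add_one_eq_succ]; exact Ordinal.isSuccLimit_omega0.succ_lt ha
  have hmem : (⟨a + 1, lt_trans ha1.2 hω⟩ : ↥(Iio ((ω : Ordinal) + 1))) ∈ Subtype.val ⁻¹' V :=
    hIoo ha1
  rw [hVp] at hmem
  have : a + 1 = ω := congrArg Subtype.val hmem
  exact ha1.2.ne this

/-- `ω^k` does not satisfy the topological pigeonhole relation for
`k` copies of `ω+1`: there is a `k`-coloring of `ω^k` no color class of which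
contains a subspace homeomorphic to `ω+1`. -/
theorem stmt1 (k : ℕ) (hk : 0 < k) :
    ∃ c : Ordinal → Fin k, ∀ i : Fin k,
      ¬ ∃ X ⊆ Iio ((ω : Ordinal) ^ (k : Ordinal)),
        (∀ x ∈ X, c x = i) ∧ IsTopCopy X (ω + 1) := by
  classical
  refine ⟨fun x => ⟨Nat.findGreatest (fun n => (ω : Ordinal) ^ (n : Ordinal) ∣ x) (k - 1),
    lt_of_le_of_lt (Nat.findGreatest_le _) (Nat.pred_lt hk.ne')⟩, ?_⟩
  rintro i ⟨X, hX, hci, hcopy⟩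
  refine no_top_copy_of_discrete ?_ hcopy
  intro x hxX
  by_cases hx0 : x = 0
  · refine ⟨Iio 1, isOpen_Iio, ?_⟩
    ext z
    simp only [Set.mem_inter_iff, Set.mem_Iio, Set.mem_singleton_iff, Ordinal.lt_one_iff_zero]
    constructor
    · rintro ⟨rfl, _⟩; exact hx0.symm
    · rintro rfl; exact ⟨hx0, hxX⟩
  · set n : ℕ := (i : ℕ) with hn
    have hfx : Nat.findGreatest (fun m => (ω : Ordinal) ^ (m : Ordinal) ∣ x) (k - 1) = n :=
      congrArg Fin.val (hci x hxX)
    have hdvd : ∀ z ∈ X, (ω : Ordinal) ^ (n : Ordinal) ∣ z := by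
      intro z hz
      have hz' : Nat.findGreatest (fun m => (ω : Ordinal) ^ (m : Ordinal) ∣ z) (k - 1) = n :=
        congrArg Fin.val (hci z hz)
      have := Nat.findGreatest_spec (m := 0) (n := k - 1)
        (P := fun m => (ω : Ordinal) ^ (m : Ordinal) ∣ z) (Nat.zero_le _) (by simp)
      rwa [hz'] at this
    have hndvd : ¬ (ω : Ordinal) ^ (n : Ordinal) * ω ∣ x := by
      intro hdvd'
      have h1 : (ω : Ordinal) ^ (((n + 1 : ℕ)) : Ordinal) ∣ x := by
        rw [Nat.cast_add, Nat.cast_one, opow_add, opow_one]; exact hdvd'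
      by_cases hcase : n + 1 ≤ k - 1
      · exact Nat.findGreatest_is_greatest (by rw [hfx]; exact Nat.lt_succ_self n) hcase h1
      · have hk' : n + 1 = k := by have := i.isLt; omega
        rw [hk'] at h1
        obtain ⟨q, hq⟩ := h1
        have hq0 : q ≠ 0 := by rintro rfl; rw [mul_zero] at hq; exact hx0 hq
        have : (ω : Ordinal) ^ (k : Ordinal) ≤ x := by
          calc (ω : Ordinal) ^ (k : Ordinal) = (ω : Ordinal) ^ (k : Ordinal) * 1 := (mul_one _).symm
          _ ≤ (ω : Ordinal) ^ (k : Ordinal) * q :=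
            mul_le_mul_right (Ordinal.one_le_iff_ne_zero.2 hq0) _
          _ = x := hq.symm
        exact absurd (hX hxX) (not_lt.2 this)
    obtain ⟨q, hq⟩ := hdvd x hxX
    have hq0 : q ≠ 0 := by rintro rfl; rw [mul_zero] at hq; exact hx0 hq
    have hmod : q % ω ≠ 0 := by
      intro h
      obtain ⟨r, hr⟩ := Ordinal.dvd_of_mod_eq_zero h
      exact hndvd ⟨r, by rw [hq, hr, mul_assoc]⟩
    obtain ⟨m, hm⟩ := Ordinal.lt_omega0.1 (Ordinal.mod_lt q Ordinal.omega0_ne_zero)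
    have hm0 : m ≠ 0 := by rintro rfl; rw [Nat.cast_zero] at hm; exact hmod hm
    obtain ⟨m', rfl⟩ := Nat.exists_eq_succ_of_ne_zero hm0
    have hqsucc : q = (ω * (q / ω) + (m' : Ordinal)) + 1 := by
      have hd := Ordinal.div_add_mod q ω
      rw [hm] at hd
      rw [add_assoc, ← Nat.cast_succ]
      exact hd.symm
    set b : Ordinal := (ω : Ordinal) ^ (n : Ordinal) * (ω * (q / ω) + (m' : Ordinal)) with hb
    have hxb : x = b + (ω : Ordinal) ^ (n : Ordinal) := by
      rw [hq, hqsucc, mul_add, mul_one]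
    refine ⟨Set.Ioo b (x + 1), isOpen_Ioo, ?_⟩
    ext z
    simp only [Set.mem_inter_iff, Set.mem_Ioo, Set.mem_singleton_iff]
    constructor
    · rintro ⟨⟨hbz, hzx⟩, hzX⟩
      by_contra hne
      rw [Ordinal.add_one_eq_succ, Order.lt_succ_iff] at hzx
      have hzlt : z < x := lt_of_le_of_ne hzx hne
      set r := z - b with hr
      have hzr : b + r = z := Ordinal.add_sub_cancel_of_le hbz.le
      have hr0 : r ≠ 0 := by intro h; rw [h, add_zero] at hzr; exact hbz.ne hzr
      have hrlt : r < (ω : Ordinal) ^ (n : Ordinal) := by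
        have : b + r < b + (ω : Ordinal) ^ (n : Ordinal) := by
          rw [hzr, ← hxb]; exact hzlt
        exact (add_lt_add_iff_left b).1 this
      have hz0 : z % (ω : Ordinal) ^ (n : Ordinal) = 0 :=
        Ordinal.mod_eq_zero_of_dvd (hdvd z hzX)
      rw [← hzr, hb, Ordinal.mul_add_mod_self, Ordinal.mod_eq_of_lt hrlt] at hz0
      exact hr0 hz0
    · rintro rfl
      refine ⟨⟨?_, ?_⟩, hxX⟩
      · rw [hxb]
        exact lt_of_eq_of_lt (add_zero b).symm
          ((add_lt_add_iff_left b).2 (opow_pos _ omega0_pos))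
      · rw [Ordinal.add_one_eq_succ]; exact Order.lt_succ _


end
end

section
/- For every positive integer k, ω^k + 1 →_top (ω+1)¹_k: for every coloring c : ω^k + 1 → k, some color class contains a subspace homeomorphic to ω+1 (equivalently, a set of order type ω+1 closed in its supremum). -/
open Ordinal Set

noncomputable section

namespace Stmt2Aux
open Filter Topology

noncomputable def toN (o : Ordinal) : ℕ :=
  if h : o < ω then (Ordinal.lt_omega0.1 h).choose else 0

lemma cast_toN {o : Ordinal} (h : o < ω) : (toN o : Ordinal) = o := by
  rw [toN, dif_pos h]; exact (Ordinal.lt_omega0.1 h).choose_spec.symm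

lemma toN_natCast (n : ℕ) : toN (n : Ordinal) = n := by
  have := cast_toN (Ordinal.nat_lt_omega0 n)
  exact_mod_cast this

lemma ord_lt_add_one_iff {a b : Ordinal} : a < b + 1 ↔ a ≤ b := by
  rw [Ordinal.add_one_eq_succ, Order.lt_succ_iff]

lemma ord_add_one_le_iff {a b : Ordinal} : a + 1 ≤ b ↔ a < b := by
  rw [Ordinal.add_one_eq_succ, Order.succ_le_iff]

lemma lt_omega_add_one_iff {x : Ordinal} : x < ω + 1 ↔ x ≤ ω := by
  rw [Ordinal.add_one_eq_succ, Order.lt_succ_iff]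

lemma isTopCopy_insert_sup (f : ℕ → Ordinal) (hf : StrictMono f) :
    IsTopCopy (insert (⨆ n, f n) (Set.range f)) (ω + 1) := by
  set s := ⨆ n, f n with hs
  have hlt : ∀ n, f n < s := fun n =>
    (hf (Nat.lt_succ_self n)).trans_le (Ordinal.le_iSup f (n + 1))
  have hωm : (ω : Ordinal) < ω + 1 := lt_omega_add_one_iff.2 le_rfl
  set g : (Iio (ω + 1) : Set Ordinal) → Ordinal :=
    fun x => if x.1 = ω then s else f (toN x.1) with hg
  have hne : ∀ x : (Iio (ω + 1) : Set Ordinal), x.1 ≠ ω → x.1 < ω := fun x hx =>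
    lt_of_le_of_ne (lt_omega_add_one_iff.1 x.2) hx
  have hmonog : ∀ x y : (Iio (ω + 1) : Set Ordinal), x.1 < y.1 → g x < g y := by
    intro x y hxy
    rcases eq_or_ne y.1 ω with hy | hy
    · have hx : x.1 ≠ ω := by exact fun heq => hxy.ne (heq.trans hy.symm)
      simp only [hg, if_neg hx, if_pos hy]
      exact hlt _
    · have hyω := hne y hy
      have hx : x.1 ≠ ω := (hxy.trans hyω).ne
      simp only [hg, if_neg hx, if_neg hy]
      apply hf
      have : (toN x.1 : Ordinal) < (toN y.1 : Ordinal) := by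
        rw [cast_toN (hne x hx), cast_toN hyω]; exact hxy
      exact_mod_cast this
  have hinj : Function.Injective g := by
    intro x y hxy
    rcases lt_trichotomy x.1 y.1 with h | h | h
    · exact absurd hxy (hmonog x y h).ne
    · exact Subtype.ext h
    · exact absurd hxy.symm (hmonog y x h).ne
  have hcont : Continuous g := by
    rw [continuous_iff_continuousAt]
    intro x
    rcases eq_or_ne x.1 ω with hx | hx
    · have hgx : g x = s := by simp [hg, hx]
      rw [ContinuousAt, hgx, tendsto_order]
      constructor
      · intro b hb
        obtain ⟨n, hn⟩ := Ordinal.lt_iSup_iff.1 hb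
        have hopen : IsOpen {y : (Iio (ω + 1) : Set Ordinal) | (n : Ordinal) < y.1} :=
          isOpen_Ioi.preimage continuous_subtype_val
        have hmem : x ∈ {y : (Iio (ω + 1) : Set Ordinal) | (n : Ordinal) < y.1} := by
          show (n : Ordinal) < x.1
          rw [hx]; exact Ordinal.nat_lt_omega0 n
        filter_upwards [hopen.mem_nhds hmem] with y hy
        rcases eq_or_ne y.1 ω with h | h
        · simpa [hg, h] using hn.trans (hlt n)
        · have hyω := hne y h
          simp only [hg, if_neg h]
          refine hn.trans (hf ?_)
          have : (n : Ordinal) < (toN y.1 : Ordinal) := by rw [cast_toN hyω]; exact hy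
          exact_mod_cast this
      · intro b hb
        refine Filter.Eventually.of_forall fun y => lt_of_le_of_lt ?_ hb
        rcases eq_or_ne y.1 ω with h | h
        · simp [hg, h]
        · simp only [hg, if_neg h]; exact (hlt _).le
    · have hxω := hne x hx
      obtain ⟨n, hn⟩ := Ordinal.lt_omega0.1 hxω
      have hsingle : ∃ U : Set (Iio (ω + 1) : Set Ordinal), IsOpen U ∧ x ∈ U ∧ ∀ y ∈ U, y = x := by
        cases n with
        | zero =>
          refine ⟨{y | y.1 < 1}, isOpen_Iio.preimage continuous_subtype_val, ?_, ?_⟩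
          · show x.1 < 1; rw [hn]; exact_mod_cast Nat.lt_succ_self 0
          · intro y hy
            apply Subtype.ext
            rw [hn, Ordinal.lt_one_iff_zero.1 hy]; simp
        | succ m =>
          refine ⟨{y | (m : Ordinal) < y.1 ∧ y.1 < x.1 + 1},
            (isOpen_Ioi.inter isOpen_Iio).preimage continuous_subtype_val, ⟨?_, ?_⟩, ?_⟩
          · rw [hn]; exact_mod_cast Nat.lt_succ_self m
          · exact ord_lt_add_one_iff.2 le_rfl
          · rintro y ⟨hy1, hy2⟩
            apply Subtype.ext
            have h1 : y.1 ≤ x.1 := ord_lt_add_one_iff.1 hy2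
            have h2 : x.1 ≤ y.1 := by
              rw [hn]
              have h3 : (m : Ordinal) + 1 ≤ y.1 := ord_add_one_le_iff.2 hy1
              exact_mod_cast h3
            exact le_antisymm h1 h2
      obtain ⟨U, hU, hxU, hU1⟩ := hsingle
      have hev : (fun _ : (Iio (ω + 1) : Set Ordinal) => g x) =ᶠ[𝓝 x] g := by
        filter_upwards [hU.mem_nhds hxU] with y hy
        rw [hU1 y hy]
      exact tendsto_const_nhds.congr' hev
  haveI : CompactSpace (Iio (ω + 1) : Set Ordinal) := by
    rw [← isCompact_iff_compactSpace]
    have : (Iio (ω + 1) : Set Ordinal) = Icc 0 ω := by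
      ext z
      simp [lt_omega_add_one_iff, zero_le]
    rw [this]
    exact isCompact_Icc
  have hemb := (hcont.isClosedEmbedding hinj).toIsEmbedding
  have hrange : insert s (Set.range f) = Set.range g := by
    ext z
    constructor
    · rintro (rfl | ⟨n, rfl⟩)
      · exact ⟨⟨ω, hωm⟩, by simp [hg]⟩
      · refine ⟨⟨(n : Ordinal), (Ordinal.nat_lt_omega0 n).trans hωm⟩, ?_⟩
        simp only [hg, if_neg (Ordinal.nat_lt_omega0 n).ne, toN_natCast]
    · rintro ⟨y, rfl⟩
      rcases eq_or_ne y.1 ω with h | h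
      · left; simp [hg, h]
      · right; simp only [hg, if_neg h]; exact ⟨_, rfl⟩
  exact ⟨(Homeomorph.setCongr hrange).trans hemb.toHomeomorph.symm⟩

lemma lt_add_opow_succ {k : ℕ} {γ x : Ordinal} (h : x < γ + ω ^ ((k : Ordinal) + 1)) :
    ∃ n : ℕ, x < γ + ω ^ (k : Ordinal) * n := by
  rcases lt_or_ge x γ with h' | h'
  · exact ⟨1, h'.trans_le le_self_add⟩
  · have hd : x - γ < ω ^ ((k : Ordinal) + 1) := by
      rwa [Ordinal.sub_lt_of_le h']
    rw [Ordinal.opow_add, Ordinal.opow_one] at hd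
    obtain ⟨e, he, hxe⟩ := (Ordinal.lt_mul_iff_of_isSuccLimit Ordinal.isSuccLimit_omega0).1 hd
    obtain ⟨n, rfl⟩ := Ordinal.lt_omega0.1 he
    refine ⟨n, ?_⟩
    calc x = γ + (x - γ) := (Ordinal.add_sub_cancel_of_le h').symm
    _ < γ + ω ^ (k : Ordinal) * n := (add_lt_add_iff_left γ).2 hxe

lemma key {α : Type} [DecidableEq α] (k : ℕ) : 0 < k → ∀ (c : Ordinal → α) (S : Finset α)
    (γ : Ordinal), S.card ≤ k → (∀ x ∈ Ioc γ (γ + ω ^ (k : Ordinal)), c x ∈ S) →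
    ∃ i, ∃ X ⊆ Ioc γ (γ + ω ^ (k : Ordinal)), (∀ x ∈ X, c x = i) ∧ IsTopCopy X (ω + 1) := by
  induction k with
  | zero => exact fun h => absurd h (lt_irrefl 0)
  | succ k IH =>
    intro _ c S γ hS hc
    rcases Nat.eq_zero_or_pos k with rfl | hk
    · -- base case: interval (γ, γ + ω]
      rw [show (((0 : ℕ) + 1 : ℕ) : Ordinal) = 1 by norm_num, Ordinal.opow_one] at hc ⊢
      set f : ℕ → Ordinal := fun n => γ + ((n : Ordinal) + 1) with hfdef
      have hmono : StrictMono f := by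
        intro a b hab
        apply (add_lt_add_iff_left γ).2
        have h1 : (a : Ordinal) + 1 ≤ (b : Ordinal) :=
          ord_add_one_le_iff.2 (by exact_mod_cast hab)
        exact h1.trans_lt (ord_lt_add_one_iff.2 le_rfl)
      set s := ⨆ n, f n with hs
      have hfs : ∀ n, f n < γ + ω := fun n => by
        apply (add_lt_add_iff_left γ).2
        have : (((n + 1 : ℕ)) : Ordinal) < ω := Ordinal.nat_lt_omega0 (n + 1)
        exact_mod_cast this
      have hsle : s ≤ γ + ω := Ordinal.iSup_le fun n => (hfs n).le
      have hγf : ∀ n, γ < f n := fun n => by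
        have : (0 : Ordinal) < (n : Ordinal) + 1 :=
          ord_lt_add_one_iff.2 zero_le
        calc γ = γ + 0 := (add_zero γ).symm
        _ < f n := (add_lt_add_iff_left γ).2 this
      have hγs : γ < s := (hγf 0).trans_le (Ordinal.le_iSup f 0)
      refine ⟨c s, insert s (Set.range f), ?_, ?_, isTopCopy_insert_sup f hmono⟩
      · rintro x (rfl | ⟨n, rfl⟩)
        · exact ⟨hγs, hsle⟩
        · exact ⟨hγf n, (hfs n).le⟩
      · intro x hx
        have hx' : x ∈ Ioc γ (γ + ω) := by
          rcases hx with rfl | ⟨n, rfl⟩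
          · exact ⟨hγs, hsle⟩
          · exact ⟨hγf n, (hfs n).le⟩
        have hsm : s ∈ Ioc γ (γ + ω) := ⟨hγs, hsle⟩
        exact Finset.card_le_one.1 hS _ (hc x hx') _ (hc s hsm)
    · -- inductive step
      rw [show (((k + 1 : ℕ)) : Ordinal) = (k : Ordinal) + 1 by push_cast; ring] at hc ⊢
      set t := γ + ω ^ ((k : Ordinal) + 1) with ht
      have hωk : (0 : Ordinal) < ω ^ (k : Ordinal) := Ordinal.opow_pos _ Ordinal.omega0_pos
      have hωk1 : (0 : Ordinal) < ω ^ ((k : Ordinal) + 1) := Ordinal.opow_pos _ Ordinal.omega0_pos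
      have hγt : γ < t := by
        calc γ = γ + 0 := (add_zero γ).symm
        _ < t := (add_lt_add_iff_left γ).2 hωk1
      have hexp : ω ^ ((k : Ordinal) + 1) = ω ^ (k : Ordinal) * ω := by
        rw [Ordinal.opow_add, Ordinal.opow_one]
      set i := c t with hi
      have hiS : i ∈ S := hc t ⟨hγt, le_rfl⟩
      set b : ℕ → Ordinal := fun n => γ + ω ^ (k : Ordinal) * n with hb
      have hbt : ∀ n : ℕ, b n < t := fun n => by
        apply (add_lt_add_iff_left γ).2
        rw [hexp]
        exact (mul_lt_mul_iff_right₀ hωk).2 (Ordinal.nat_lt_omega0 n)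
      by_cases hP : ∀ β < t, ∃ x, β < x ∧ γ < x ∧ x < t ∧ c x = i
      · -- color i cofinal below t
        have step : ∀ β, β < t → {x : Ordinal // β < x ∧ γ < x ∧ x < t ∧ c x = i} :=
          fun β hβ => ⟨(hP β hβ).choose, (hP β hβ).choose_spec⟩
        set F : ℕ → {x : Ordinal // γ < x ∧ x < t ∧ c x = i} :=
          fun n => Nat.rec (motive := fun _ => {x : Ordinal // γ < x ∧ x < t ∧ c x = i})
            ⟨(step γ hγt).1, (step γ hγt).2.2⟩
            (fun m p => ⟨(step (max p.1 (b (m + 1))) (max_lt p.2.2.1 (hbt (m + 1)))).1,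
              (step (max p.1 (b (m + 1))) (max_lt p.2.2.1 (hbt (m + 1)))).2.2⟩) n with hF
        set f : ℕ → Ordinal := fun n => (F n).1 with hf
        have hstep : ∀ m, max (f m) (b (m + 1)) < f (m + 1) := fun m =>
          (step (max (f m) (b (m + 1))) (max_lt (F m).2.2.1 (hbt (m + 1)))).2.1
        have hmono : StrictMono f :=
          strictMono_nat_of_lt_succ fun n => (le_max_left _ _).trans_lt (hstep n)
        have hbf : ∀ m, b (m + 1) < f (m + 1) := fun m => (le_max_right _ _).trans_lt (hstep m)
        have hft : ∀ n, f n < t := fun n => (F n).2.2.1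
        have hfγ : ∀ n, γ < f n := fun n => (F n).2.1
        set s := ⨆ n, f n with hs
        have hst : s ≤ t := Ordinal.iSup_le fun n => (hft n).le
        have hts : t ≤ s := by
          by_contra hcon
          push_neg at hcon
          obtain ⟨n, hn⟩ := lt_add_opow_succ hcon
          have h1 : b n ≤ b (n + 1) := by
            apply add_le_add_right
            apply mul_le_mul_right
            exact_mod_cast Nat.le_succ n
          exact absurd (hn.trans_le (h1.trans ((hbf n).le.trans (Ordinal.le_iSup f (n + 1)))))
            (lt_irrefl s)
        have hseq : s = t := hst.antisymm hts
        refine ⟨i, insert s (Set.range f), ?_, ?_, isTopCopy_insert_sup f hmono⟩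
        · rintro x (rfl | ⟨n, rfl⟩)
          · exact ⟨(hfγ 0).trans_le (Ordinal.le_iSup f 0), hst⟩
          · exact ⟨hfγ n, (hft n).le⟩
        · rintro x (rfl | ⟨n, rfl⟩)
          · rw [hseq]
          · exact (F n).2.2.2
      · -- color i bounded below t
        push_neg at hP
        obtain ⟨β, hβt, hβ⟩ := hP
        have hβ't : max β γ < t := max_lt hβt hγt
        obtain ⟨n, hn⟩ := lt_add_opow_succ hβ't
        set δ := γ + ω ^ (k : Ordinal) * n with hδ
        have hδδ : δ + ω ^ (k : Ordinal) = γ + ω ^ (k : Ordinal) * ((n : Ordinal) + 1) := by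
          rw [hδ, add_assoc, mul_add_one]
        have hδt : δ + ω ^ (k : Ordinal) < t := by
          rw [hδδ]
          apply (add_lt_add_iff_left γ).2
          rw [hexp]
          apply (mul_lt_mul_iff_right₀ hωk).2
          have : ((n + 1 : ℕ) : Ordinal) < ω := Ordinal.nat_lt_omega0 (n + 1)
          exact_mod_cast this
        have hγδ : γ ≤ δ := le_self_add
        have hc' : ∀ x ∈ Ioc δ (δ + ω ^ (k : Ordinal)), c x ∈ S.erase i := by
          rintro x ⟨hx1, hx2⟩
          have hxγ : γ < x := hγδ.trans_lt hx1
          have hxt : x < t := hx2.trans_lt hδt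
          have hxβ : β < x := (le_max_left β γ).trans_lt (hn.trans hx1)
          exact Finset.mem_erase.2 ⟨hβ x hxβ hxγ hxt, hc x ⟨hxγ, hxt.le⟩⟩
        have hcard : (S.erase i).card ≤ k := by
          rw [Finset.card_erase_of_mem hiS]
          exact Nat.sub_le_sub_right hS 1
        obtain ⟨j, X, hXsub, hmo, hcopy⟩ := IH hk c (S.erase i) δ hcard hc'
        refine ⟨j, X, ?_, hmo, hcopy⟩
        intro x hx
        obtain ⟨hx1, hx2⟩ := hXsub hx
        exact ⟨hγδ.trans_lt hx1, hx2.trans hδt.le⟩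

end Stmt2Aux

/-- `ω^k + 1 →_top (ω+1)¹_k`. -/
theorem stmt2 (k : ℕ) (hk : 0 < k) :
    ToTop1 ((ω : Ordinal) ^ (k : Ordinal) + 1) (ω + 1) k := by
  intro c
  obtain ⟨i, X, hXsub, hmono, hcopy⟩ := Stmt2Aux.key k hk c Finset.univ 0
    (by simp) (fun x _ => Finset.mem_univ _)
  refine ⟨i, X, ?_, hmono, hcopy⟩
  intro x hx
  have h := (hXsub hx).2
  rw [zero_add] at h
  exact Stmt2Aux.ord_lt_add_one_iff.2 h

end
end

section
/- Let k be a positive integer, let X be a perfect ℵ₀-tree of height k (every non-leaf has ℵ₀ immediate successors and every leaf has exactly k predecessors), and let c be a 2-coloring of the leaves of X. Then there exists a full subtree Y of X (a subset that is itself a perfect ℵ₀-tree of height k under the induced order) such that all leaves of Y receive the same color. -/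
open Ordinal Set

noncomputable section

/-- Predecessors of `x` in the subtree `S` with respect to the strict relation `r`. -/
def TreePred {α : Type*} (r : α → α → Prop) (S : Set α) (x : α) : Set α := {y ∈ S | r y x}

/-- `y` is an immediate successor of `x` within `S`. -/
def TreeCov {α : Type*} (r : α → α → Prop) (S : Set α) (x y : α) : Prop :=
  x ∈ S ∧ y ∈ S ∧ r x y ∧ ¬ ∃ z ∈ S, r x z ∧ r z y

/-- `x` is a leaf of `S`: it belongs to `S` and has no immediate successors in `S`. -/
def TreeLeaf {α : Type*} (r : α → α → Prop) (S : Set α) (x : α) : Prop :=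
  x ∈ S ∧ ¬ ∃ y, TreeCov r S x y

/-- `S` is a perfect ℵ₀-tree of height `k` under the strict relation `r`:
it is single-rooted, predecessor sets are finite and linearly ordered,
every non-leaf has countably infinitely many immediate successors,
and every leaf has exactly `k` predecessors. -/
def IsPerfectTree {α : Type*} (r : α → α → Prop) (S : Set α) (k : ℕ) : Prop :=
  (∃ root ∈ S, ∀ x ∈ S, x = root ∨ r root x) ∧
  (∀ x ∈ S, (TreePred r S x).Finite ∧
    ∀ y ∈ TreePred r S x, ∀ z ∈ TreePred r S x, y = z ∨ r y z ∨ r z y) ∧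
  (∀ x ∈ S, ¬ TreeLeaf r S x →
    {y | TreeCov r S x y}.Countable ∧ {y | TreeCov r S x y}.Infinite) ∧
  (∀ x ∈ S, TreeLeaf r S x → (TreePred r S x).ncard = k)

section Aux

variable {T : Type*} [PartialOrder T]

/-- If `Y1 ⊆ Y2` and every element of `Y2` strictly above `x ∈ Y1` is in `Y1`,
then covers of `x` agree in `Y1` and `Y2`. -/
lemma treeCov_iff_of {Y1 Y2 : Set T} (h12 : Y1 ⊆ Y2) {x : T}
    (hx : x ∈ Y1) (hab : ∀ z ∈ Y2, x < z → z ∈ Y1) (z : T) :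
    TreeCov (· < ·) Y1 x z ↔ TreeCov (· < ·) Y2 x z := by
  constructor
  · rintro ⟨hx1, hz1, hxz, hno⟩
    exact ⟨h12 hx1, h12 hz1, hxz, fun ⟨w, hw, hxw, hwz⟩ =>
      hno ⟨w, hab w hw hxw, hxw, hwz⟩⟩
  · rintro ⟨hx2, hz2, hxz, hno⟩
    exact ⟨hx, hab z hz2 hxz, hxz, fun ⟨w, hw, hxw, hwz⟩ =>
      hno ⟨w, h12 hw, hxw, hwz⟩⟩

lemma treeLeaf_iff_of {Y1 Y2 : Set T} (h12 : Y1 ⊆ Y2) {x : T}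
    (hx : x ∈ Y1) (hab : ∀ z ∈ Y2, x < z → z ∈ Y1) :
    TreeLeaf (· < ·) Y1 x ↔ TreeLeaf (· < ·) Y2 x := by
  unfold TreeLeaf
  constructor
  · rintro ⟨_, hno⟩
    exact ⟨h12 hx, fun ⟨y, hy⟩ => hno ⟨y, (treeCov_iff_of h12 hx hab y).2 hy⟩⟩
  · rintro ⟨_, hno⟩
    exact ⟨hx, fun ⟨y, hy⟩ => hno ⟨y, (treeCov_iff_of h12 hx hab y).1 hy⟩⟩

/-- Main lemma, proved by induction on `k`. -/
lemma mainLemma : ∀ (k : ℕ) (S : Set T), IsPerfectTree (· < ·) S k → ∀ c : T → Bool,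
    ∃ Y, Y ⊆ S ∧ IsPerfectTree (· < ·) Y k ∧
      ∃ b : Bool, ∀ x : T, TreeLeaf (· < ·) Y x → c x = b := by
  intro k
  induction k with
  | zero =>
    intro S hS c
    obtain ⟨⟨r, hrS, hroot⟩, hpred, hsucc, hleaf⟩ := hS
    refine ⟨S, le_refl S, ⟨⟨r, hrS, hroot⟩, hpred, hsucc, hleaf⟩, c r, ?_⟩
    intro x hx
    have h0 : (TreePred (· < ·) S x).ncard = 0 := hleaf x hx.1 hx
    have hfin : (TreePred (· < ·) S x).Finite := (hpred x hx.1).1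
    have hemp : TreePred (· < ·) S x = ∅ := (Set.ncard_eq_zero hfin).1 h0
    have : x = r := by
      rcases hroot x hx.1 with h | h
      · exact h
      · exfalso
        have : r ∈ TreePred (· < ·) S x := ⟨hrS, h⟩
        rw [hemp] at this
        exact this
    rw [this]
  | succ k IH =>
    intro S hS c
    obtain ⟨⟨r, hrS, hroot⟩, hpred, hsucc, hleaf⟩ := hS
    -- the root has empty predecessor set, so it is not a leaf
    have hrpred : TreePred (· < ·) S r = ∅ := by
      ext w
      simp only [TreePred, Set.mem_setOf_eq, Set.mem_empty_iff_false, iff_false, not_and]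
      intro hwS hwr
      rcases hroot w hwS with h | h
      · exact absurd (h ▸ hwr) (lt_irrefl _)
      · exact absurd hwr (asymm h)
    have hrnotleaf : ¬ TreeLeaf (· < ·) S r := by
      intro hl
      have := hleaf r hrS hl
      rw [hrpred] at this
      simp at this
    -- the set of immediate successors of the root
    set C : Set T := {y | TreeCov (· < ·) S r y} with hCdef
    obtain ⟨hCcount, hCinf⟩ := hsucc r hrS hrnotleaf
    -- basic facts about elements of C
    have hCS : ∀ y ∈ C, y ∈ S := fun y hy => hy.2.1
    have hrC : ∀ y ∈ C, r < y := fun y hy => hy.2.2.1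
    -- the predecessor set of any element of C is exactly {r}
    have hpredC : ∀ y ∈ C, TreePred (· < ·) S y = {r} := by
      intro y hy
      ext w
      simp only [TreePred, Set.mem_setOf_eq, Set.mem_singleton_iff]
      constructor
      · rintro ⟨hwS, hwy⟩
        rcases hroot w hwS with h | h
        · exact h
        · exact absurd ⟨w, hwS, h, hwy⟩ hy.2.2.2
      · rintro rfl
        exact ⟨hrS, hrC y hy⟩
    -- two elements of C below a common element of S are equal
    have hcomp : ∀ y ∈ C, ∀ y' ∈ C, ∀ z ∈ S, y ≤ z → y' ≤ z → y = y' := by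
      intro y hy y' hy' z hzS hyz hy'z
      by_contra hne
      have hry : r < y := hrC y hy
      have hry' : r < y' := hrC y' hy'
      have key : ∀ u ∈ C, ∀ v ∈ C, u < v → False := by
        intro u hu v hv huv
        have : u ∈ TreePred (· < ·) S v := ⟨hCS u hu, huv⟩
        rw [hpredC v hv] at this
        exact absurd (this ▸ hrC u hu) (lt_irrefl _)
      rcases lt_or_eq_of_le hyz with hyz | rfl
      · rcases lt_or_eq_of_le hy'z with hy'z | rfl
        · have hylt : y ∈ TreePred (· < ·) S z := ⟨hCS y hy, hyz⟩
          have hy'lt : y' ∈ TreePred (· < ·) S z := ⟨hCS y' hy', hy'z⟩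
          rcases (hpred z hzS).2 y hylt y' hy'lt with h | h | h
          · exact hne h
          · exact key y hy y' hy' h
          · exact key y' hy' y hy h
        · exact key y hy y' hy' hyz
      · rcases lt_or_eq_of_le hy'z with hy'z | rfl
        · exact key y' hy' y hy hy'z
        · exact hne rfl
    -- the subtree above each y ∈ C is a perfect tree of height k
    have habove : ∀ y ∈ C, ∀ x ∈ {z ∈ S | y ≤ z}, ∀ z ∈ S, x < z → z ∈ {w ∈ S | y ≤ w} :=
      fun y _ x hx z hzS hxz => ⟨hzS, le_trans hx.2 (le_of_lt hxz)⟩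
    have hsubperf : ∀ y ∈ C, IsPerfectTree (· < ·) {z ∈ S | y ≤ z} k := by
      intro y hy
      set Sy : Set T := {z ∈ S | y ≤ z} with hSydef
      have hSyS : Sy ⊆ S := fun z hz => hz.1
      have hySy : y ∈ Sy := ⟨hCS y hy, le_refl y⟩
      have hcovi : ∀ x ∈ Sy, ∀ z, TreeCov (· < ·) Sy x z ↔ TreeCov (· < ·) S x z :=
        fun x hx z => treeCov_iff_of hSyS hx (habove y hy x hx) z
      have hleafi : ∀ x ∈ Sy, (TreeLeaf (· < ·) Sy x ↔ TreeLeaf (· < ·) S x) :=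
        fun x hx => treeLeaf_iff_of hSyS hx (habove y hy x hx)
      refine ⟨⟨y, hySy, fun x hx => ?_⟩, fun x hx => ⟨?_, ?_⟩, fun x hx hnl => ?_, fun x hx hl => ?_⟩
      · rcases lt_or_eq_of_le hx.2 with h | h
        · exact Or.inr h
        · exact Or.inl h.symm
      · exact ((hpred x (hSyS hx)).1).subset (fun w hw => ⟨hSyS hw.1, hw.2⟩)
      · intro a ha b hb
        exact (hpred x (hSyS hx)).2 a ⟨hSyS ha.1, ha.2⟩ b ⟨hSyS hb.1, hb.2⟩
      · have hset : {z | TreeCov (· < ·) Sy x z} = {z | TreeCov (· < ·) S x z} := by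
          ext z; exact hcovi x hx z
        rw [hset]
        exact hsucc x (hSyS hx) (fun h => hnl ((hleafi x hx).2 h))
      · -- leaf of Sy has k predecessors in Sy
        have hlS : TreeLeaf (· < ·) S x := (hleafi x hx).1 hl
        have hk1 : (TreePred (· < ·) S x).ncard = k + 1 := hleaf x (hSyS hx) hlS
        have hr_not : r ∉ TreePred (· < ·) Sy x := by
          rintro ⟨⟨_, hyr⟩, _⟩
          exact absurd (hrC y hy) (not_lt_of_ge hyr)
        have hfinSy : (TreePred (· < ·) Sy x).Finite :=
          ((hpred x (hSyS hx)).1).subset (fun w hw => ⟨hSyS hw.1, hw.2⟩)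
        have hsplit : TreePred (· < ·) S x = insert r (TreePred (· < ·) Sy x) := by
          ext w
          simp only [TreePred, Set.mem_setOf_eq, Set.mem_insert_iff]
          constructor
          · rintro ⟨hwS, hwx⟩
            by_cases hyw : y ≤ w
            · exact Or.inr ⟨⟨hwS, hyw⟩, hwx⟩
            · -- w < y since w and y are comparable predecessors of x
              rcases lt_or_eq_of_le hx.2 with hyx | hyx
              · have hwp : w ∈ TreePred (· < ·) S x := ⟨hwS, hwx⟩
                have hyp : y ∈ TreePred (· < ·) S x := ⟨hCS y hy, hyx⟩
                rcases (hpred x (hSyS hx)).2 w hwp y hyp with h | h | h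
                · exact absurd (le_of_eq h.symm) hyw
                · have : w ∈ TreePred (· < ·) S y := ⟨hwS, h⟩
                  rw [hpredC y hy] at this
                  exact Or.inl this
                · exact absurd (le_of_lt h) hyw
              · -- x = y, so w < y, so w = r
                have : w ∈ TreePred (· < ·) S y := ⟨hwS, hyx ▸ hwx⟩
                rw [hpredC y hy] at this
                exact Or.inl this
          · rintro (rfl | ⟨hwSy, hwx⟩)
            · refine ⟨hrS, ?_⟩
              exact lt_of_lt_of_le (hrC y hy) hx.2
            · exact ⟨hSyS hwSy, hwx⟩
        rw [hsplit, Set.ncard_insert_of_notMem hr_not hfinSy] at hk1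
        exact Nat.succ_injective hk1
    -- apply the induction hypothesis above each y ∈ C
    have hEx : ∀ y ∈ C, ∃ Z, Z ⊆ {z ∈ S | y ≤ z} ∧ IsPerfectTree (· < ·) Z k ∧
        ∃ b : Bool, ∀ x : T, TreeLeaf (· < ·) Z x → c x = b :=
      fun y hy => IH _ (hsubperf y hy) c
    choose! Ys hsub hperf bcol hmono using hEx
    have hroots : ∀ y ∈ C, ∃ ρ ∈ Ys y, ∀ x ∈ Ys y, x = ρ ∨ ρ < x :=
      fun y hy => (hperf y hy).1
    choose! ρ hρmem hρroot using hroots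
    -- pigeonhole: infinitely many y ∈ C get the same color
    have hpig : ∃ b : Bool, {y ∈ C | bcol y = b}.Infinite := by
      by_contra h
      push_neg at h
      have h1 := (h true)
      have h2 := (h false)
      apply hCinf
      have : C ⊆ {y ∈ C | bcol y = true} ∪ {y ∈ C | bcol y = false} := by
        intro y hy
        cases hb : bcol y
        · exact Or.inr ⟨hy, hb⟩
        · exact Or.inl ⟨hy, hb⟩
      exact (h1.union h2).subset this
    obtain ⟨b, hC'inf⟩ := hpig
    set C' : Set T := {y ∈ C | bcol y = b} with hC'def
    have hC'C : ∀ y ∈ C', y ∈ C := fun y hy => hy.1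
    -- the full subtree
    set Y : Set T := insert r (⋃ y ∈ C', Ys y) with hYdef
    have hrY : r ∈ Y := Set.mem_insert r _
    have hmemY : ∀ x ∈ Y, x = r ∨ ∃ y ∈ C', x ∈ Ys y := by
      intro x hx
      rcases hx with h | h
      · exact Or.inl h
      · simp only [Set.mem_iUnion] at h
        obtain ⟨y, hy, hxy⟩ := h
        exact Or.inr ⟨y, hy, hxy⟩
    have hYsY : ∀ y ∈ C', Ys y ⊆ Y := by
      intro y hy x hx
      exact Set.mem_insert_of_mem _ (Set.mem_biUnion hy hx)
    have hYsS : ∀ y ∈ C', ∀ x ∈ Ys y, x ∈ S ∧ y ≤ x := by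
      intro y hy x hx
      have := hsub y (hC'C y hy) hx
      exact ⟨this.1, this.2⟩
    have hYS : Y ⊆ S := by
      intro x hx
      rcases hmemY x hx with rfl | ⟨y, hy, hxy⟩
      · exact hrS
      · exact (hYsS y hy x hxy).1
    have hrlt : ∀ x ∈ Y, x ≠ r → r < x := by
      intro x hx hne
      rcases hmemY x hx with h | ⟨y, hy, hxy⟩
      · exact absurd h hne
      · exact lt_of_lt_of_le (hrC y (hC'C y hy)) (hYsS y hy x hxy).2
    -- locality: anything in Y strictly above an element of Ys y stays in Ys y
    have hloc : ∀ y ∈ C', ∀ x ∈ Ys y, ∀ z ∈ Y, x < z → z ∈ Ys y := by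
      intro y hy x hx z hz hxz
      rcases hmemY z hz with rfl | ⟨y', hy', hzy'⟩
      · exact absurd (lt_trans (lt_of_lt_of_le (hrC y (hC'C y hy)) (hYsS y hy x hx).2) hxz)
          (lt_irrefl _)
      · have hy'z : y' ≤ z := (hYsS y' hy' z hzy').2
        have hyz : y ≤ z := le_trans (hYsS y hy x hx).2 (le_of_lt hxz)
        have : y = y' := hcomp y (hC'C y hy) y' (hC'C y' hy') z (hYsS y' hy' z hzy').1 hyz hy'z
        rwa [this]
    have hcovY : ∀ y ∈ C', ∀ x ∈ Ys y, ∀ z,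
        TreeCov (· < ·) (Ys y) x z ↔ TreeCov (· < ·) Y x z :=
      fun y hy x hx z => treeCov_iff_of (hYsY y hy) hx (hloc y hy x hx) z
    have hleafY : ∀ y ∈ C', ∀ x ∈ Ys y,
        (TreeLeaf (· < ·) (Ys y) x ↔ TreeLeaf (· < ·) Y x) :=
      fun y hy x hx => treeLeaf_iff_of (hYsY y hy) hx (hloc y hy x hx)
    -- the covers of r in Y are exactly the roots ρ y for y ∈ C'
    have hρY : ∀ y ∈ C', ρ y ∈ Y := fun y hy => hYsY y hy (hρmem y (hC'C y hy))
    have hyρ : ∀ y ∈ C', y ≤ ρ y := fun y hy => (hYsS y hy (ρ y) (hρmem y (hC'C y hy))).2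
    have hcovr : {z | TreeCov (· < ·) Y r z} = ρ '' C' := by
      ext z
      simp only [Set.mem_setOf_eq, Set.mem_image]
      constructor
      · rintro ⟨_, hzY, hrz, hno⟩
        rcases hmemY z hzY with rfl | ⟨y, hy, hzy⟩
        · exact absurd hrz (lt_irrefl _)
        · refine ⟨y, hy, ?_⟩
          rcases hρroot y (hC'C y hy) z hzy with h | h
          · exact h.symm
          · exfalso
            exact hno ⟨ρ y, hρY y hy, lt_of_lt_of_le (hrC y (hC'C y hy)) (hyρ y hy), h⟩
      · rintro ⟨y, hy, rfl⟩
        refine ⟨hrY, hρY y hy, lt_of_lt_of_le (hrC y (hC'C y hy)) (hyρ y hy), ?_⟩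
        rintro ⟨w, hwY, hrw, hwρ⟩
        rcases hmemY w hwY with rfl | ⟨y', hy', hwy'⟩
        · exact absurd hrw (lt_irrefl _)
        · have hy'w : y' ≤ w := (hYsS y' hy' w hwy').2
          have heq : y = y' := hcomp y (hC'C y hy) y' (hC'C y' hy') (ρ y)
            (hYsS y hy (ρ y) (hρmem y (hC'C y hy))).1 (hyρ y hy)
            (le_trans hy'w (le_of_lt hwρ))
          subst heq
          rcases hρroot y (hC'C y hy) w hwy' with h | h
          · exact absurd (h ▸ hwρ) (lt_irrefl (ρ y))
          · exact absurd hwρ (asymm h)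
    have hρinj : Set.InjOn ρ C' := by
      intro y hy y' hy' heq
      exact hcomp y (hC'C y hy) y' (hC'C y' hy') (ρ y)
        (hYsS y hy (ρ y) (hρmem y (hC'C y hy))).1 (hyρ y hy) (heq ▸ hyρ y' hy')
    -- r is not a leaf of Y
    have hrnotleafY : ¬ TreeLeaf (· < ·) Y r := by
      rintro ⟨_, hno⟩
      obtain ⟨y, hy⟩ := hC'inf.nonempty
      apply hno
      refine ⟨ρ y, ?_⟩
      have : ρ y ∈ {z | TreeCov (· < ·) Y r z} := by
        rw [hcovr]; exact ⟨y, hy, rfl⟩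
      exact this
    -- predecessor sets in Y
    have hpredYx : ∀ y ∈ C', ∀ x ∈ Ys y,
        TreePred (· < ·) Y x = insert r (TreePred (· < ·) (Ys y) x) ∨ x = r := by
      intro y hy x hx
      left
      ext w
      simp only [TreePred, Set.mem_setOf_eq, Set.mem_insert_iff]
      constructor
      · rintro ⟨hwY, hwx⟩
        rcases hmemY w hwY with rfl | ⟨y', hy', hwy'⟩
        · exact Or.inl rfl
        · have : y = y' := hcomp y (hC'C y hy) y' (hC'C y' hy') x
            (hYsS y hy x hx).1 (hYsS y hy x hx).2
            (le_trans (hYsS y' hy' w hwy').2 (le_of_lt hwx))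
          exact Or.inr ⟨this ▸ hwy', hwx⟩
      · rintro (rfl | ⟨hwYs, hwx⟩)
        · refine ⟨hrY, ?_⟩
          exact lt_of_lt_of_le (hrC y (hC'C y hy)) (hYsS y hy x hx).2
        · exact ⟨hYsY y hy hwYs, hwx⟩
    refine ⟨Y, hYS, ⟨⟨r, hrY, fun x hx => ?_⟩, fun x hx => ⟨?_, ?_⟩,
      fun x hx hnl => ?_, fun x hx hl => ?_⟩, b, ?_⟩
    · by_cases h : x = r
      · exact Or.inl h
      · exact Or.inr (hrlt x hx h)
    · exact ((hpred x (hYS hx)).1).subset (fun w hw => ⟨hYS hw.1, hw.2⟩)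
    · intro a ha b' hb'
      exact (hpred x (hYS hx)).2 a ⟨hYS ha.1, ha.2⟩ b' ⟨hYS hb'.1, hb'.2⟩
    · -- non-leaf of Y has countably infinitely many covers
      rcases hmemY x hx with rfl | ⟨y, hy, hxy⟩
      · rw [hcovr]
        exact ⟨(hCcount.mono (fun y hy => hC'C y hy)).image ρ, (hC'inf.image hρinj)⟩
      · have hset : {z | TreeCov (· < ·) Y x z} = {z | TreeCov (· < ·) (Ys y) x z} := by
          ext z; exact (hcovY y hy x hxy z).symm
        rw [hset]
        have hnl' : ¬ TreeLeaf (· < ·) (Ys y) x :=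
          fun h => hnl ((hleafY y hy x hxy).1 h)
        exact (hperf y (hC'C y hy)).2.2.1 x hxy hnl'
    · -- leaf of Y has k+1 predecessors
      rcases hmemY x hx with rfl | ⟨y, hy, hxy⟩
      · exact absurd hl hrnotleafY
      · have hlYs : TreeLeaf (· < ·) (Ys y) x := (hleafY y hy x hxy).2 hl
        have hkk : (TreePred (· < ·) (Ys y) x).ncard = k :=
          (hperf y (hC'C y hy)).2.2.2 x hxy hlYs
        rcases hpredYx y hy x hxy with hsp | rfl
        · have hr_not : r ∉ TreePred (· < ·) (Ys y) x := by
            rintro ⟨hrYs, _⟩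
            exact absurd (hrC y (hC'C y hy)) (not_lt_of_ge (hYsS y hy r hrYs).2)
          have hfin : (TreePred (· < ·) (Ys y) x).Finite :=
            ((hpred x (hYS hx)).1).subset
              (fun w hw => ⟨(hYsS y hy w hw.1).1, hw.2⟩)
          rw [hsp, Set.ncard_insert_of_notMem hr_not hfin, hkk]
        · exact absurd hl hrnotleafY
    · -- monochromaticity
      intro x hl
      rcases hmemY x hl.1 with rfl | ⟨y, hy, hxy⟩
      · exact absurd hl hrnotleafY
      · have hlYs : TreeLeaf (· < ·) (Ys y) x := (hleafY y hy x hxy).2 hl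
        rw [hmono y (hC'C y hy) x hlYs]
        exact hy.2

end Aux

/-- every 2-coloring of the leaves of a perfect ℵ₀-tree of height `k`
admits a full subtree all of whose leaves get the same color. -/
theorem stmt5 {T : Type*} [PartialOrder T] (k : ℕ) (hk : 0 < k)
    (hT : IsPerfectTree (· < ·) (Set.univ : Set T) k) (c : T → Bool) :
    ∃ Y : Set T, IsPerfectTree (· < ·) Y k ∧
      ∃ b : Bool, ∀ x : T, TreeLeaf (· < ·) Y x → c x = b := by
  obtain ⟨Y, _, hY, b, hb⟩ := mainLemma k Set.univ hT c
  exact ⟨Y, hY, b, hb⟩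

end
end

section
/- If β is a nonzero countable ordinal and k is a positive integer, then ω^(ω^β) → (ω^(ω^β))¹_k for the closed relation: for every coloring c : ω^(ω^β) → k, some color class contains a subset of order type ω^(ω^β) that is closed in its supremum. Equivalently, P^cl(ω^(ω^β))_k = ω^(ω^β). -/
open Ordinal Set

noncomputable section

namespace NaturalOps

universe w

/-- Natural (Hessenberg) sum of ordinals. -/
def nadd (a b : Ordinal.{w}) : Ordinal.{w} :=
  sInf {c | (∀ a' < a, nadd a' b < c) ∧ ∀ b' < b, nadd a b' < c}
termination_by (a, b)
decreasing_by
  · exact Prod.Lex.left _ _ ‹_›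
  · exact Prod.Lex.right _ ‹_›

infixl:65 " ♯ " => nadd

theorem nadd_def (a b : Ordinal.{w}) :
    a ♯ b = sInf {c | (∀ a' < a, a' ♯ b < c) ∧ ∀ b' < b, a ♯ b' < c} := by
  rw [nadd]

theorem nadd_set_nonempty (a b : Ordinal.{w}) :
    {c | (∀ a' < a, a' ♯ b < c) ∧ ∀ b' < b, a ♯ b' < c}.Nonempty := by
  obtain ⟨M, hM⟩ := Ordinal.bddAbove_of_small
    (s := (fun a' => a' ♯ b) '' Iio a ∪ (fun b' => a ♯ b') '' Iio b)
  exact ⟨Order.succ M, fun a' ha' => Order.lt_succ_iff.2 (hM (Or.inl ⟨a', ha', rfl⟩)),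
    fun b' hb' => Order.lt_succ_iff.2 (hM (Or.inr ⟨b', hb', rfl⟩))⟩

theorem nadd_mem (a b : Ordinal.{w}) :
    a ♯ b ∈ {c | (∀ a' < a, a' ♯ b < c) ∧ ∀ b' < b, a ♯ b' < c} := by
  have := csInf_mem (nadd_set_nonempty a b)
  rwa [← nadd_def] at this

theorem nadd_lt_nadd_right {a b : Ordinal.{w}} (h : a < b) (c : Ordinal.{w}) : a ♯ c < b ♯ c :=
  (nadd_mem b c).1 a h

theorem nadd_lt_nadd_left {b c : Ordinal.{w}} (h : b < c) (a : Ordinal.{w}) : a ♯ b < a ♯ c :=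
  (nadd_mem a c).2 b h

theorem nadd_le_iff {a b c : Ordinal.{w}} :
    a ♯ b ≤ c ↔ (∀ a' < a, a' ♯ b < c) ∧ ∀ b' < b, a ♯ b' < c :=
  ⟨fun h => ⟨fun a' ha' => (nadd_lt_nadd_right ha' b).trans_le h,
    fun b' hb' => (nadd_lt_nadd_left hb' a).trans_le h⟩,
   fun h => by rw [nadd_def]; exact csInf_le' h⟩

theorem nadd_comm : ∀ a b : Ordinal.{w}, a ♯ b = b ♯ a := by
  intro a
  induction a using Ordinal.induction with
  | _ a IHa =>
    intro b
    induction b using Ordinal.induction with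
    | _ b IHb =>
      rw [nadd_def a b, nadd_def b a]
      congr 1
      ext c
      simp only [mem_setOf_eq]
      constructor
      · rintro ⟨h1, h2⟩
        exact ⟨fun b' hb' => by rw [← IHb b' hb']; exact h2 b' hb',
          fun a' ha' => by rw [← IHa a' ha' b]; exact h1 a' ha'⟩
      · rintro ⟨h1, h2⟩
        exact ⟨fun a' ha' => by rw [IHa a' ha' b]; exact h2 a' ha',
          fun b' hb' => by rw [IHb b' hb']; exact h1 b' hb'⟩

theorem nadd_zero : ∀ a : Ordinal.{w}, a ♯ 0 = a := by
  intro a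
  induction a using Ordinal.induction with
  | _ a IH =>
    apply le_antisymm
    · rw [nadd_le_iff]
      exact ⟨fun a' ha' => by rw [IH a' ha']; exact ha',
        fun b' hb' => absurd hb' (show (0 : Ordinal) ≤ b' from zero_le).not_gt⟩
    · by_contra h
      push_neg at h
      have := nadd_lt_nadd_right h 0
      rw [IH _ h] at this
      exact lt_irrefl _ this

theorem zero_nadd (a : Ordinal.{w}) : 0 ♯ a = a := by
  rw [nadd_comm, nadd_zero]

end NaturalOps

open NaturalOps Cardinal

namespace Stmt6
universe u

def Dit (S : Set Ordinal) (ξ : Ordinal) : Set Ordinal :=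
  {x | x ∈ S ∧ ∀ ζ < ξ, ∀ β < x, ∃ z ∈ Dit S ζ, β < z ∧ z < x}
termination_by ξ
decreasing_by assumption

theorem mem_Dit {S : Set Ordinal} {ξ x : Ordinal} :
    x ∈ Dit S ξ ↔ x ∈ S ∧ ∀ ζ < ξ, ∀ β < x, ∃ z ∈ Dit S ζ, β < z ∧ z < x := by
  rw [Dit]; rfl

theorem Dit_subset {S : Set Ordinal} {ξ : Ordinal} : Dit S ξ ⊆ S :=
  fun _ hx => (mem_Dit.1 hx).1

theorem Dit_zero {S : Set Ordinal} : Dit S 0 = S := by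
  ext x; rw [mem_Dit]
  exact ⟨fun h => h.1, fun h => ⟨h, fun ζ hζ => absurd hζ (show (0 : Ordinal) ≤ ζ from zero_le).not_gt⟩⟩

theorem Dit_anti {S : Set Ordinal} {ζ ξ : Ordinal} (h : ζ ≤ ξ) : Dit S ξ ⊆ Dit S ζ := by
  intro x hx
  rw [mem_Dit] at hx ⊢
  exact ⟨hx.1, fun δ hδ => hx.2 δ (hδ.trans_le h)⟩

theorem Dit_mono {S T : Set Ordinal} (h : S ⊆ T) : ∀ {ξ}, Dit S ξ ⊆ Dit T ξ := by
  intro ξ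
  induction ξ using Ordinal.induction with
  | _ ξ IH =>
    intro x hx
    rw [mem_Dit] at hx ⊢
    refine ⟨h hx.1, fun ζ hζ β hβ => ?_⟩
    obtain ⟨z, hz, h1, h2⟩ := hx.2 ζ hζ β hβ
    exact ⟨z, IH ζ hζ hz, h1, h2⟩

/-- If `x ∈ S` but `x ∉ Dit S σ`, there is a "rank" `g < σ` with
`x ∈ Dit S g`, `x ∉ Dit S (g+1)`. -/
theorem exists_rank {S : Set Ordinal} {σ x : Ordinal} (hxS : x ∈ S) (hx : x ∉ Dit S σ) :
    ∃ g < σ, x ∈ Dit S g ∧ x ∉ Dit S (g + 1) := by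
  have hne : {ξ : Ordinal | x ∉ Dit S ξ}.Nonempty := ⟨σ, hx⟩
  set ξ₀ := sInf {ξ : Ordinal | x ∉ Dit S ξ} with hξ₀
  have hmem : x ∉ Dit S ξ₀ := csInf_mem hne
  have hmin : ∀ ζ < ξ₀, x ∈ Dit S ζ := by
    intro ζ hζ
    by_contra hc
    exact absurd (csInf_le' (show ζ ∈ {ξ : Ordinal | x ∉ Dit S ξ} from hc)) hζ.not_ge
  have hξ₀le : ξ₀ ≤ σ := csInf_le' hx
  -- ξ₀ is not 0 and not a limit
  rcases Ordinal.zero_or_succ_or_isSuccLimit ξ₀ with h0 | ⟨g, hg⟩ | hlim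
  · rw [h0, Dit_zero] at hmem; exact absurd hxS hmem
  · refine ⟨g, ?_, ?_, ?_⟩
    · have : g < ξ₀ := by rw [← hg]; exact Order.lt_succ g
      calc g < ξ₀ := this
        _ ≤ σ := hξ₀le
    · exact hmin g (by rw [← hg]; exact Order.lt_succ g)
    · rwa [← Order.succ_eq_add_one, hg]
  · exfalso
    apply hmem
    rw [mem_Dit]
    refine ⟨hxS, fun ζ hζ β hβ => ?_⟩
    have h1 : x ∈ Dit S (ζ + 1) := hmin _ (hlim.add_one_lt hζ)
    exact (mem_Dit.1 h1).2 ζ (lt_add_one ζ) β hβ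

/-- If `x ∈ Dit S g` but `x ∉ Dit S (g+1)` then beyond some `β < x` there are
no points of `Dit S g` below `x`. Moreover `x ≠ 0` in this situation. -/
theorem tail_free {S : Set Ordinal} {g x : Ordinal} (h1 : x ∈ Dit S g)
    (h2 : x ∉ Dit S (g + 1)) :
    ∃ β < x, ∀ z, β < z → z < x → z ∉ Dit S g := by
  by_contra hc
  push_neg at hc
  apply h2
  rw [mem_Dit]
  refine ⟨Dit_subset h1, fun ζ hζ β hβ => ?_⟩
  rcases lt_or_eq_of_le (Order.lt_add_one_iff.1 hζ) with hζg | rfl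
  · exact (mem_Dit.1 h1).2 ζ hζg β hβ
  · obtain ⟨z, h1', h2', h3'⟩ := hc β hβ
    exact ⟨z, h3', h1', h2'⟩

theorem Dit_inter_Iic {S : Set Ordinal} : ∀ {ξ x}, x ∈ Dit S ξ → x ∈ Dit (S ∩ Iic x) ξ := by
  intro ξ
  induction ξ using Ordinal.induction with
  | _ ξ IH =>
    intro x hx
    rw [mem_Dit] at hx ⊢
    refine ⟨⟨hx.1, mem_Iic.2 le_rfl⟩, fun ζ hζ β hβ => ?_⟩
    obtain ⟨z, hz, h1, h2⟩ := hx.2 ζ hζ β hβ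
    refine ⟨z, Dit_mono ?_ (IH ζ hζ hz), h1, h2⟩
    exact inter_subset_inter_right _ (Iic_subset_Iic.2 h2.le)

/-- Core pigeonhole lemma for the derivative hierarchy and the natural sum. -/
theorem keyQ : ∀ y : Ordinal, ∀ (A B : Set Ordinal) (g t : Ordinal),
    y ∈ Dit A g → (∃ β < y, ∀ z, β < z → z < y → z ∉ Dit A g) →
    (∃ β < y, ∀ z, β < z → z < y → z ∉ Dit B t) →
    y ∉ Dit (A ∪ B) (g ♯ t + 1) := by
  intro y
  induction y using Ordinal.induction with
  | _ y IH =>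
    rintro A B g t hyg ⟨β₁, hβ₁y, hTA⟩ ⟨β₀, hβ₀y, hTB⟩ hmem
    obtain ⟨z, hz, hz1, hz2⟩ :=
      (mem_Dit.1 hmem).2 (g ♯ t) (lt_add_one _) (max β₁ β₀) (max_lt hβ₁y hβ₀y)
    have hzβ₁ : β₁ < z := (le_max_left β₁ β₀).trans_lt hz1
    have hzβ₀ : β₀ < z := (le_max_right β₁ β₀).trans_lt hz1
    rcases Dit_subset hz with hzA | hzB
    · -- z ∈ A
      have hznot : z ∉ Dit A g := hTA z hzβ₁ hz2
      obtain ⟨g', hg', hzg', hzg's⟩ := exists_rank hzA hznot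
      obtain ⟨β₁', hβ₁', hTA'⟩ := tail_free hzg' hzg's
      have hTB' : ∀ w, β₀ < w → w < z → w ∉ Dit B t :=
        fun w hw1 hw2 => hTB w hw1 (hw2.trans hz2)
      have := IH z hz2 A B g' t hzg' ⟨β₁', hβ₁', hTA'⟩ ⟨β₀, hzβ₀, hTB'⟩
      apply this
      refine Dit_anti ?_ hz
      have : g' ♯ t < g ♯ t := nadd_lt_nadd_right hg' t
      exact Order.add_one_le_iff.2 this
    · -- z ∈ B
      have hznot : z ∉ Dit B t := hTB z hzβ₀ hz2
      obtain ⟨t', ht', hzt', hzt's⟩ := exists_rank hzB hznot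
      obtain ⟨β₀', hβ₀', hTB'⟩ := tail_free hzt' hzt's
      have hTA' : ∀ w, β₁ < w → w < z → w ∉ Dit A g :=
        fun w hw1 hw2 => hTA w hw1 (hw2.trans hz2)
      have := IH z hz2 B A t' g hzt' ⟨β₀', hβ₀', hTB'⟩ ⟨β₁, hzβ₁, hTA'⟩
      rw [union_comm B A] at this
      apply this
      refine Dit_anti ?_ hz
      have : t' ♯ g < g ♯ t := by
        rw [nadd_comm t' g]
        exact nadd_lt_nadd_left ht' g
      exact Order.add_one_le_iff.2 this

theorem keyE {A B : Set Ordinal} {σ τ : Ordinal} (hA : ∀ y, y ∉ Dit A σ)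
    (hB : ∀ y, y ∉ Dit B τ) : ∀ x, x ∉ Dit (A ∪ B) (σ ♯ τ) := by
  intro x hx
  rcases Dit_subset hx with hxA | hxB
  · obtain ⟨g, hg, h1, h2⟩ := exists_rank hxA (hA x)
    obtain ⟨β, hβ, hT⟩ := tail_free h1 h2
    have := keyQ x A B g τ h1 ⟨β, hβ, hT⟩ ⟨β, hβ, fun z _ _ => hB z⟩
    apply this
    refine Dit_anti (Order.add_one_le_iff.2 (nadd_lt_nadd_right hg τ)) hx
  · obtain ⟨t, ht, h1, h2⟩ := exists_rank hxB (hB x)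
    obtain ⟨β, hβ, hT⟩ := tail_free h1 h2
    have := keyQ x B A t σ h1 ⟨β, hβ, hT⟩ ⟨β, hβ, fun z _ _ => hA z⟩
    rw [union_comm B A] at this
    apply this
    refine Dit_anti ?_ hx
    rw [nadd_comm]
    exact Order.add_one_le_iff.2 (nadd_lt_nadd_left ht σ)


private theorem cast_of_lt_nat {x : Ordinal} {p : ℕ} (h : x < (p : Ordinal)) :
    ∃ m : ℕ, x = (m : Ordinal) ∧ m < p := by
  obtain ⟨m, rfl⟩ := Ordinal.lt_omega0.1 (h.trans (nat_lt_omega0 p))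
  exact ⟨m, rfl, by exact_mod_cast h⟩

theorem nadd_closure_aux {d : Ordinal}
    (hd : ∀ u v : Ordinal, u < ω ^ d → v < ω ^ d → u ♯ v < ω ^ d) :
    ∀ c : Ordinal, ∀ (px pz : ℕ) (rx rz : Ordinal), rx < ω ^ d → rz < ω ^ d →
      (ω ^ d * px + rx) ♯ (ω ^ d * pz + rz) = c →
      c ≤ ω ^ d * (px + pz) + (rx ♯ rz) := by
  intro c
  induction c using Ordinal.induction with
  | _ c IH =>
    intro px pz rx rz hrx hrz hc
    have hop : (ω : Ordinal) ^ d ≠ 0 := (opow_pos d omega0_pos).ne'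
    subst hc
    rw [nadd_le_iff]
    constructor
    · intro x' hx'
      rcases le_or_gt (ω ^ d * px) x' with hcase | hcase
      · -- x' = ω^d*px + r', r' < rx
        set r' := x' - ω ^ d * px with hr'
        have hx'eq : x' = ω ^ d * px + r' := (Ordinal.add_sub_cancel_of_le hcase).symm
        have hr'rx : r' < rx := by
          rw [hx'eq] at hx'
          exact (add_lt_add_iff_left (ω ^ d * px)).1 hx'
        have hlt : x' ♯ (ω ^ d * pz + rz) < (ω ^ d * px + rx) ♯ (ω ^ d * pz + rz) :=
          nadd_lt_nadd_right (by rw [hx'eq]; exact (add_lt_add_iff_left _).2 hr'rx) _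
        have := IH _ hlt px pz r' rz (hr'rx.trans hrx) hrz (by rw [hx'eq])
        calc x' ♯ (ω ^ d * pz + rz) ≤ ω ^ d * (px + pz) + (r' ♯ rz) := this
          _ < ω ^ d * (px + pz) + (rx ♯ rz) :=
            (add_lt_add_iff_left _).2 (nadd_lt_nadd_right hr'rx rz)
      · -- x' < ω^d*px
        have hq : x' / ω ^ d < (px : Ordinal) := (Ordinal.div_lt hop).2 hcase
        obtain ⟨px', hpx'eq, hpx'⟩ := cast_of_lt_nat hq
        have hdm : ω ^ d * (x' / ω ^ d) + x' % ω ^ d = x' := Ordinal.div_add_mod x' (ω ^ d)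
        have hxeq : x' = ω ^ d * (px' : Ordinal) + x' % ω ^ d := by
          rw [← hpx'eq, hdm]
        have hmod : x' % ω ^ d < ω ^ d := Ordinal.mod_lt x' hop
        have hlt : x' ♯ (ω ^ d * pz + rz) < (ω ^ d * px + rx) ♯ (ω ^ d * pz + rz) :=
          nadd_lt_nadd_right (hcase.trans_le (le_self_add)) _
        have hIH := IH _ hlt px' pz (x' % ω ^ d) rz hmod hrz (by rw [← hxeq])
        have h1 : ω ^ d * (px' + pz) + (x' % ω ^ d ♯ rz) < ω ^ d * (px' + pz) + ω ^ d :=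
          (add_lt_add_iff_left _).2 (hd _ _ hmod hrz)
        have h3 : (ω ^ d : Ordinal) * ((px' : Ordinal) + pz + 1) ≤ ω ^ d * (px + pz) := by
          apply mul_le_mul_right
          exact_mod_cast Nat.cast_le.2 (show px' + pz + 1 ≤ px + pz by omega)
        calc x' ♯ (ω ^ d * pz + rz) ≤ ω ^ d * (px' + pz) + (x' % ω ^ d ♯ rz) := hIH
          _ < ω ^ d * (px' + pz) + ω ^ d := h1
          _ = ω ^ d * ((px' : Ordinal) + pz + 1) := by
              rw [mul_add (ω ^ d) ((px' : Ordinal) + pz) 1, mul_one]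
          _ ≤ ω ^ d * (px + pz) := h3
          _ ≤ ω ^ d * (px + pz) + (rx ♯ rz) := le_self_add
    · intro z' hz'
      rcases le_or_gt (ω ^ d * pz) z' with hcase | hcase
      · set r' := z' - ω ^ d * pz with hr'
        have hz'eq : z' = ω ^ d * pz + r' := (Ordinal.add_sub_cancel_of_le hcase).symm
        have hr'rz : r' < rz := by
          rw [hz'eq] at hz'
          exact (add_lt_add_iff_left (ω ^ d * pz)).1 hz'
        have hlt : (ω ^ d * px + rx) ♯ z' < (ω ^ d * px + rx) ♯ (ω ^ d * pz + rz) :=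
          nadd_lt_nadd_left (by rw [hz'eq]; exact (add_lt_add_iff_left _).2 hr'rz) _
        have := IH _ hlt px pz rx r' hrx (hr'rz.trans hrz) (by rw [hz'eq])
        calc (ω ^ d * px + rx) ♯ z' ≤ ω ^ d * (px + pz) + (rx ♯ r') := this
          _ < ω ^ d * (px + pz) + (rx ♯ rz) :=
            (add_lt_add_iff_left _).2 (nadd_lt_nadd_left hr'rz rx)
      · have hq : z' / ω ^ d < (pz : Ordinal) := (Ordinal.div_lt hop).2 hcase
        obtain ⟨pz', hpz'eq, hpz'⟩ := cast_of_lt_nat hq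
        have hdm : ω ^ d * (z' / ω ^ d) + z' % ω ^ d = z' := Ordinal.div_add_mod z' (ω ^ d)
        have hzeq : z' = ω ^ d * (pz' : Ordinal) + z' % ω ^ d := by
          rw [← hpz'eq, hdm]
        have hmod : z' % ω ^ d < ω ^ d := Ordinal.mod_lt z' hop
        have hlt : (ω ^ d * px + rx) ♯ z' < (ω ^ d * px + rx) ♯ (ω ^ d * pz + rz) :=
          nadd_lt_nadd_left (hcase.trans_le (le_self_add)) _
        have hIH := IH _ hlt px pz' rx (z' % ω ^ d) hrx hmod (by rw [← hzeq])
        have h1 : ω ^ d * (px + pz') + (rx ♯ z' % ω ^ d) < ω ^ d * (px + pz') + ω ^ d :=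
          (add_lt_add_iff_left _).2 (hd _ _ hrx hmod)
        have h3 : (ω ^ d : Ordinal) * ((px : Ordinal) + pz' + 1) ≤ ω ^ d * (px + pz) := by
          apply mul_le_mul_right
          exact_mod_cast Nat.cast_le.2 (show px + pz' + 1 ≤ px + pz by omega)
        calc (ω ^ d * px + rx) ♯ z' ≤ ω ^ d * (px + pz') + (rx ♯ z' % ω ^ d) := hIH
          _ < ω ^ d * (px + pz') + ω ^ d := h1
          _ = ω ^ d * ((px : Ordinal) + pz' + 1) := by
              rw [mul_add (ω ^ d) ((px : Ordinal) + pz') 1, mul_one]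
          _ ≤ ω ^ d * (px + pz) := h3
          _ ≤ ω ^ d * (px + pz) + (rx ♯ rz) := le_self_add

theorem nadd_lt_omega0_opow : ∀ {e : Ordinal}, ∀ {a b : Ordinal},
    a < ω ^ e → b < ω ^ e → a ♯ b < ω ^ e := by
  intro e
  induction e using Ordinal.induction with
  | _ e IHe =>
    intro a b ha hb
    rcases eq_or_ne a 0 with rfl | ha0
    · rwa [zero_nadd]
    rcases eq_or_ne b 0 with rfl | hb0
    · rwa [nadd_zero]
    have h1ω : (1 : Ordinal) < ω := one_lt_omega0
    have hloga : log ω a < e := (lt_opow_iff_log_lt h1ω ha0).1 ha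
    have hlogb : log ω b < e := (lt_opow_iff_log_lt h1ω hb0).1 hb
    set d := max (log ω a) (log ω b) with hdd
    have hde : d < e := max_lt hloga hlogb
    have hdcl : ∀ u v : Ordinal, u < ω ^ d → v < ω ^ d → u ♯ v < ω ^ d :=
      fun u v hu hv => IHe d hde hu hv
    have haa : a < ω ^ d * ω := by
      calc a < ω ^ Order.succ (log ω a) := lt_opow_succ_log_self h1ω a
        _ = ω ^ (log ω a) * ω := by rw [Order.succ_eq_add_one, opow_add, opow_one]
        _ ≤ ω ^ d * ω := mul_le_mul_left (opow_le_opow_right omega0_pos (le_max_left _ _)) ω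
    have hbb : b < ω ^ d * ω := by
      calc b < ω ^ Order.succ (log ω b) := lt_opow_succ_log_self h1ω b
        _ = ω ^ (log ω b) * ω := by rw [Order.succ_eq_add_one, opow_add, opow_one]
        _ ≤ ω ^ d * ω := mul_le_mul_left (opow_le_opow_right omega0_pos (le_max_right _ _)) ω
    obtain ⟨ma', hma', haa'⟩ := (lt_mul_iff_of_isSuccLimit isSuccLimit_omega0).1 haa
    obtain ⟨mb', hmb', hbb'⟩ := (lt_mul_iff_of_isSuccLimit isSuccLimit_omega0).1 hbb
    obtain ⟨ma, rfl⟩ := Ordinal.lt_omega0.1 hma'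
    obtain ⟨mb, rfl⟩ := Ordinal.lt_omega0.1 hmb'
    -- decompose a and b
    have hop : (ω : Ordinal) ^ d ≠ 0 := (opow_pos d omega0_pos).ne'
    obtain ⟨pa, hpaeq, _⟩ := cast_of_lt_nat ((Ordinal.div_lt hop).2 haa')
    obtain ⟨pb, hpbeq, _⟩ := cast_of_lt_nat ((Ordinal.div_lt hop).2 hbb')
    have hadec : a = ω ^ d * (pa : Ordinal) + a % ω ^ d := by
      rw [← hpaeq, Ordinal.div_add_mod]
    have hbdec : b = ω ^ d * (pb : Ordinal) + b % ω ^ d := by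
      rw [← hpbeq, Ordinal.div_add_mod]
    have key := nadd_closure_aux hdcl (a ♯ b) pa pb (a % ω ^ d) (b % ω ^ d)
      (Ordinal.mod_lt a hop) (Ordinal.mod_lt b hop) (by rw [← hadec, ← hbdec])
    calc a ♯ b ≤ ω ^ d * (pa + pb) + (a % ω ^ d ♯ b % ω ^ d) := key
      _ < ω ^ d * (pa + pb) + ω ^ d :=
        (add_lt_add_iff_left _).2 (hdcl _ _ (Ordinal.mod_lt a hop) (Ordinal.mod_lt b hop))
      _ = ω ^ d * ((pa : Ordinal) + pb + 1) := by
          rw [mul_add (ω ^ d) ((pa : Ordinal) + pb) 1, mul_one]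
      _ < ω ^ d * ω := (mul_lt_mul_iff_right₀ (opow_pos d omega0_pos)).2 (by
          have := nat_lt_omega0 (pa + pb + 1); push_cast at this; exact this)
      _ = ω ^ (d + 1) := by rw [opow_add, opow_one]
      _ ≤ ω ^ e := opow_le_opow_right omega0_pos (Order.add_one_le_iff.2 hde)

/-- Interval rank lemma: `β + ω^δ` has rank at least `δ` in `Ioi β`. -/
theorem add_opow_mem_Dit : ∀ δ β : Ordinal, β + ω ^ δ ∈ Dit (Ioi β) δ := by
  intro δ
  induction δ using Ordinal.induction with
  | _ δ IH =>
    intro β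
    rw [mem_Dit]
    refine ⟨mem_Ioi.2 (lt_add_of_pos_right β (opow_pos δ omega0_pos)), ?_⟩
    intro ζ hζ β' hβ'
    refine ⟨(β ⊔ β') + ω ^ ζ, ?_, ?_, ?_⟩
    · exact Dit_mono (Ioi_subset_Ioi (le_max_left β β')) (IH ζ hζ (β ⊔ β'))
    · calc β' ≤ β ⊔ β' := le_max_right β β'
        _ < (β ⊔ β') + ω ^ ζ := lt_add_of_pos_right _ (opow_pos ζ omega0_pos)
    · rcases le_total β' β with h | h
      · rw [sup_eq_left.2 h]
        exact (add_lt_add_iff_left β).2 ((opow_lt_opow_iff_right one_lt_omega0).2 hζ)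
      · rw [sup_eq_right.2 h]
        have hu : β' - β < ω ^ δ := by
          have := hβ'
          rwa [← Ordinal.add_sub_cancel_of_le h, add_lt_add_iff_left] at this
        have : β' + ω ^ ζ = β + ((β' - β) + ω ^ ζ) := by
          rw [← add_assoc, Ordinal.add_sub_cancel_of_le h]
        rw [this]
        apply (add_lt_add_iff_left β).2
        exact principal_add_omega0_opow δ hu ((opow_lt_opow_iff_right one_lt_omega0).2 hζ)

/-- Union over finitely many sets, each with empty `γ`-th derivative. -/
theorem keyU {γ : Ordinal} {As : ℕ → Set Ordinal.{u}} (Δ : ℕ → Ordinal) (hΔ0 : Δ 0 = 0)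
    (hΔs : ∀ n, Δ (n + 1) = Δ n ♯ γ) (h : ∀ n, ∀ y, y ∉ Dit (As n) γ) :
    ∀ k, ∀ x, x ∉ Dit (⋃ i ∈ Finset.range k, As i) (Δ k) := by
  intro k
  induction k with
  | zero =>
    intro x hx
    have := Dit_subset hx
    simp at this
  | succ k IHk =>
    have hU : (⋃ i ∈ Finset.range (k + 1), As i)
        = (⋃ i ∈ Finset.range k, As i) ∪ As k := by
      ext x
      simp only [Finset.mem_range, Nat.lt_add_one_iff, le_iff_lt_or_eq, mem_iUnion, mem_union,
          exists_prop]
      constructor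
      · rintro ⟨i, hi | rfl, hx⟩
        · exact Or.inl ⟨i, hi, hx⟩
        · exact Or.inr hx
      · rintro (⟨i, hi, hx⟩ | hx)
        · exact ⟨i, Or.inl hi, hx⟩
        · exact ⟨k, Or.inr rfl, hx⟩
    rw [hU, hΔs]
    exact keyE IHk (h k)

theorem opow_lt_omega1 : ∀ {b : Ordinal.{u}}, b < (Cardinal.aleph 1).ord →
    (ω : Ordinal.{u}) ^ b < (Cardinal.aleph 1).ord := by
  intro b
  induction b using Ordinal.limitRecOn with
  | zero =>
    intro _
    rw [opow_zero, Cardinal.lt_ord, card_one]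
    exact Cardinal.one_lt_aleph0.trans_le (Cardinal.aleph0_le_aleph 1)
  | add_one o IH =>
    intro h
    have ho : o < (Cardinal.aleph 1).ord := (lt_add_one o).trans h
    rw [opow_add_one, Cardinal.lt_ord, card_mul, card_omega0]
    refine Cardinal.mul_lt_of_lt (Cardinal.aleph0_le_aleph 1) ?_ ?_
    · rw [← Cardinal.lt_ord]; exact IH ho
    · exact Cardinal.aleph0_lt_aleph_one
  | limit o ho IH =>
    intro h
    have hbsup : (ω : Ordinal.{u}) ^ o ≤ Ordinal.bsup o (fun c _ => ω ^ c) :=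
      (opow_le_of_isSuccLimit omega0_ne_zero ho).2 (fun c hc => Ordinal.le_bsup _ c hc)
    refine hbsup.trans_lt (Ordinal.bsup_lt_ord ?_ ?_)
    · rw [Cardinal.isRegular_aleph_one.cof_eq, ← Cardinal.lt_ord]
      exact h
    · intro i hi
      exact IH i hi (hi.trans h)

theorem card_opow_le {b : Ordinal.{u}} (hb : b.card ≤ Cardinal.aleph0) :
    ((ω : Ordinal.{u}) ^ b).card ≤ Cardinal.aleph0 := by
  have h1 : b < (Cardinal.aleph 1).ord := by
    rw [Cardinal.lt_ord, ← Cardinal.succ_aleph0, Order.lt_succ_iff]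
    exact hb
  have := opow_lt_omega1 h1
  rw [Cardinal.lt_ord, ← Cardinal.succ_aleph0, Order.lt_succ_iff] at this
  exact this

theorem exists_cof_seq {y : Ordinal.{u}} (h0 : 0 < y) (hc : y.card ≤ Cardinal.aleph0) :
    ∃ w : ℕ → Ordinal.{u}, (∀ n, w n < y) ∧ (∀ β < y, ∃ n, β ≤ w n) := by
  have hmk : #↥(Iio y) ≤ Cardinal.aleph0 := by
    rw [Ordinal.mk_Iio_ordinal]
    calc Cardinal.lift.{u+1} y.card ≤ Cardinal.lift.{u+1} Cardinal.aleph0 :=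
      Cardinal.lift_le.2 hc
      _ = Cardinal.aleph0 := Cardinal.lift_aleph0
  haveI : Countable ↥(Iio y) := Cardinal.mk_le_aleph0_iff.1 hmk
  haveI : Nonempty ↥(Iio y) := ⟨⟨0, h0⟩⟩
  obtain ⟨f, hf⟩ := exists_surjective_nat ↥(Iio y)
  let w : ℕ → Ordinal.{u} := fun n =>
    Nat.rec (motive := fun _ => Ordinal.{u}) (f 0).1 (fun k acc => max acc (f (k + 1)).1) n
  have hwlt : ∀ n, w n < y := by
    intro n
    induction n with
    | zero => exact (f 0).2
    | succ k IH => exact max_lt IH (f (k + 1)).2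
  have hwf : ∀ n, (f n).1 ≤ w n := by
    intro n
    cases n with
    | zero => exact le_rfl
    | succ k => exact le_max_right _ _
  refine ⟨w, hwlt, fun β hβ => ?_⟩
  obtain ⟨n, hn⟩ := hf ⟨β, hβ⟩
  refine ⟨n, ?_⟩
  calc β = (f n).1 := by rw [hn]
    _ ≤ w n := hwf n

theorem glue (X : ℕ → Set Ordinal) (T : ℕ → Ordinal) (m : ℕ → Ordinal) (s : ℕ → Ordinal)
    (hs0 : s 0 = 0) (hss : ∀ n, s (n + 1) = s n + T n)
    (hT : ∀ n, 0 < T n)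
    (hcopy : ∀ n, IsClosedCopy (X n) (T n))
    (hm : ∀ n, m n ∈ X n) (hmtop : ∀ n, ∀ x ∈ X n, x ≤ m n)
    (hsep : ∀ n, ∀ x ∈ X (n + 1), m n < x) :
    IsClosedCopy (⋃ n, X n) (⨆ n, s n) ∧ sSup (⋃ n, X n) = ⨆ n, m n := by
  classical
  have mmono : StrictMono m := strictMono_nat_of_lt_succ (fun n => hsep n _ (hm (n + 1)))
  have hord : ∀ {i j : ℕ}, i < j → ∀ z ∈ X j, m i < z := by
    intro i j hij
    induction j with
    | zero => omega
    | succ j IHj =>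
      intro z hz
      rcases Nat.lt_succ_iff_lt_or_eq.1 hij with h | rfl
      · exact (mmono.monotone (by omega : i ≤ j)).trans_lt (hsep j z hz)
      · exact hsep i z hz
  have hordx : ∀ {i j : ℕ}, i < j → ∀ x ∈ X i, ∀ z ∈ X j, x < z :=
    fun hij x hx z hz => (hmtop _ x hx).trans_lt (hord hij z hz)
  have mbd : BddAbove (Set.range m) := Ordinal.bddAbove_range m
  set Y := ⨆ n, m n with hY
  have hmY : ∀ n, m n ≤ Y := fun n => le_ciSup mbd n
  have hblY : ∀ n, ∀ x ∈ X n, x ≤ Y := fun n x hx => (hmtop n x hx).trans (hmY n)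
  have hubd : BddAbove (⋃ n, X n) := by
    refine ⟨Y, fun x hx => ?_⟩
    obtain ⟨n, hn⟩ := mem_iUnion.1 hx
    exact hblY n x hn
  have hune : (⋃ n, X n).Nonempty := ⟨m 0, mem_iUnion.2 ⟨0, hm 0⟩⟩
  have hsupU : sSup (⋃ n, X n) = Y := by
    apply le_antisymm
    · exact csSup_le hune (fun x hx => by
        obtain ⟨n, hn⟩ := mem_iUnion.1 hx; exact hblY n x hn)
    · exact ciSup_le fun n => le_csSup hubd (mem_iUnion.2 ⟨n, hm n⟩)
  have smono : StrictMono s := strictMono_nat_of_lt_succ (fun n => by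
    rw [hss]; exact lt_add_of_pos_right _ (hT n))
  have sbd : BddAbove (Set.range s) := Ordinal.bddAbove_range s
  set L := ⨆ n, s n with hL
  have hsL : ∀ n, s n < L := fun n => (smono (Nat.lt_succ_self n)).trans_le (le_ciSup sbd (n + 1))
  have existsn : ∀ v : Ordinal, v < L → ∃ n, v < s (n + 1) := by
    intro v hv
    obtain ⟨N, hN⟩ := (lt_ciSup_iff sbd).1 hv
    cases N with
    | zero => rw [hs0] at hN; exact absurd hN (show (0 : Ordinal) ≤ v from zero_le).not_gt
    | succ n => exact ⟨n, hN⟩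
  have e : ∀ n, ↥(X n) ≃o ↥(Iio (T n)) := fun n => (hcopy n).1.some
  -- the block maps, as plain functions
  let g : ℕ → Ordinal → Ordinal := fun n u =>
    if hu : u < T n then ((e n).symm ⟨u, hu⟩ : ↥(X n)).1 else 0
  have gmem : ∀ n u, u < T n → g n u ∈ X n := by
    intro n u hu
    simp only [g, dif_pos hu]
    exact ((e n).symm _).2
  have gmono : ∀ n u u', u < u' → u' < T n → g n u < g n u' := by
    intro n u u' huu hu'
    have hu : u < T n := huu.trans hu'
    simp only [g, dif_pos hu, dif_pos hu']
    have : ((e n).symm ⟨u, hu⟩ : ↥(X n)) < (e n).symm ⟨u', hu'⟩ := by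
      rw [OrderIso.lt_iff_lt]
      exact Subtype.mk_lt_mk.2 huu
    exact this
  have gsurj : ∀ n, ∀ x ∈ X n, ∃ u, ∃ hu : u < T n, g n u = x := by
    intro n x hx
    refine ⟨(e n ⟨x, hx⟩).1, (e n ⟨x, hx⟩).2, ?_⟩
    simp only [g, Subtype.eta, OrderIso.symm_apply_apply]
    rw [dif_pos (show ((e n ⟨x, hx⟩) : Ordinal) < T n from (e n ⟨x, hx⟩).2)]; simp
  -- index function
  let idx : ∀ v : Ordinal, v < L → ℕ := fun v hv => Nat.find (existsn v hv)
  have hidx1 : ∀ v hv, v < s (idx v hv + 1) := fun v hv => Nat.find_spec (existsn v hv)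
  have hidx2 : ∀ v hv, s (idx v hv) ≤ v := by
    intro v hv
    rcases Nat.eq_zero_or_eq_succ_pred (idx v hv) with h | h
    · rw [h, hs0]; exact (show (0 : Ordinal) ≤ v from zero_le)
    · have := Nat.find_min (existsn v hv) (by omega : idx v hv - 1 < idx v hv)
      rw [show (idx v hv - 1) + 1 = idx v hv by omega] at this
      exact le_of_not_gt this
  have hidxval : ∀ v hv, v - s (idx v hv) < T (idx v hv) := by
    intro v hv
    rw [Ordinal.sub_lt_of_le (hidx2 v hv), ← hss]
    exact hidx1 v hv
  have hidx_eq : ∀ (v : Ordinal) (hv : v < L) (n : ℕ), s n ≤ v → v < s (n + 1) →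
      idx v hv = n := by
    intro v hv n h1 h2
    have hle : idx v hv ≤ n := Nat.find_min' (existsn v hv) h2
    rcases lt_or_eq_of_le hle with hlt | heq
    · exfalso
      have : s (idx v hv + 1) ≤ s n := smono.monotone (by omega)
      exact absurd ((hidx1 v hv).trans_le (this.trans h1)) (lt_irrefl v)
    · exact heq
  let F : ↥(Iio L) → ↥(⋃ n, X n) := fun v =>
    ⟨g (idx v.1 v.2) (v.1 - s (idx v.1 v.2)),
      mem_iUnion.2 ⟨idx v.1 v.2, gmem _ _ (hidxval v.1 v.2)⟩⟩
  have Fmono : StrictMono F := by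
    rintro ⟨v, hv⟩ ⟨v', hv'⟩ hvv'
    have hvv : v < v' := hvv'
    show g (idx v hv) (v - s (idx v hv)) < g (idx v' hv') (v' - s (idx v' hv'))
    have hle : idx v hv ≤ idx v' hv' :=
      Nat.find_min' (existsn v hv) (hvv.trans (hidx1 v' hv'))
    rcases lt_or_eq_of_le hle with hlt | heq
    · exact hordx hlt _ (gmem _ _ (hidxval v hv)) _ (gmem _ _ (hidxval v' hv'))
    · rw [← heq]
      apply gmono
      · have h1 : s (idx v hv) + (v - s (idx v hv)) = v :=
          Ordinal.add_sub_cancel_of_le (hidx2 v hv)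
        have h2 : s (idx v hv) + (v' - s (idx v hv)) = v' :=
          Ordinal.add_sub_cancel_of_le (heq ▸ hidx2 v' hv')
        rw [← add_lt_add_iff_left (s (idx v hv)), h1, h2]
        exact hvv
      · rw [heq]; exact hidxval v' hv'
  have Fsurj : Function.Surjective F := by
    rintro ⟨x, hx⟩
    obtain ⟨n, hn⟩ := mem_iUnion.1 hx
    obtain ⟨u, hu, hgu⟩ := gsurj n x hn
    have hv1 : s n + u < s (n + 1) := by rw [hss]; exact (add_lt_add_iff_left _).2 hu
    have hv : s n + u < L := hv1.trans (hsL (n + 1))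
    refine ⟨⟨s n + u, hv⟩, ?_⟩
    have hie : idx (s n + u) hv = n := hidx_eq _ hv n (le_self_add) hv1
    apply Subtype.ext
    show g (idx (s n + u) hv) ((s n + u) - s (idx (s n + u) hv)) = x
    rw [hie, Ordinal.add_sub_cancel, hgu]
  have hcopyU : IsOrderCopy (⋃ n, X n) L :=
    ⟨(StrictMono.orderIsoOfSurjective F Fmono Fsurj).symm⟩
  refine ⟨⟨hcopyU, ?_⟩, hsupU⟩
  -- closedness
  intro S hS hSne hSlt
  rw [hsupU] at hSlt
  obtain ⟨K, hK⟩ := (lt_ciSup_iff mbd).1 hSlt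
  have hSbd : BddAbove S := hubd.mono hS
  have hidxbd : ∀ j, K < j → S ∩ X j = ∅ := by
    intro j hj
    by_contra hc
    obtain ⟨x, hxS, hxX⟩ := nonempty_iff_ne_empty.2 hc
    have h1 : x ≤ sSup S := le_csSup hSbd hxS
    have h2 : m K < x := hord hj x hxX
    exact absurd (h2.trans_le h1) (not_lt_of_ge hK.le)
  -- greatest block index meeting S
  obtain ⟨x₀, hx₀⟩ := id hSne
  obtain ⟨n₀, hn₀⟩ := mem_iUnion.1 (hS hx₀)
  have hn₀K : n₀ ≤ K := by
    by_contra hc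
    have := hidxbd n₀ (by omega)
    rw [eq_empty_iff_forall_notMem] at this
    exact this x₀ ⟨hx₀, hn₀⟩
  let P : ℕ → Prop := fun n => (S ∩ X n).Nonempty
  have hPd : DecidablePred P := fun _ => Classical.dec _
  let N := Nat.findGreatest P K
  have hPN : P N := Nat.findGreatest_spec (m := n₀) hn₀K ⟨x₀, hx₀, hn₀⟩
  have hmaxN : ∀ j, N < j → ¬(S ∩ X j).Nonempty := by
    intro j hj hc
    rcases le_or_gt j K with hjK | hjK
    · exact Nat.findGreatest_is_greatest hj hjK hc
    · rw [hidxbd j hjK] at hc; exact Set.not_nonempty_empty hc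
  have hjN : ∀ x ∈ S, ∃ j ≤ N, x ∈ X j := by
    intro x hx
    obtain ⟨j, hj⟩ := mem_iUnion.1 (hS hx)
    refine ⟨j, ?_, hj⟩
    by_contra hc
    exact hmaxN j (by omega) ⟨x, hx, hj⟩
  have hSNbd : BddAbove (S ∩ X N) := hSbd.mono inter_subset_left
  have hsupeq : sSup S = sSup (S ∩ X N) := by
    apply le_antisymm
    · apply csSup_le hSne
      intro x hx
      obtain ⟨j, hjle, hjX⟩ := hjN x hx
      obtain ⟨z₀, hz₀⟩ := hPN
      rcases lt_or_eq_of_le hjle with h | rfl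
      · exact (hordx h x hjX z₀ hz₀.2).le.trans (le_csSup hSNbd hz₀)
      · exact le_csSup hSNbd ⟨hx, hjX⟩
    · exact csSup_le_csSup hSbd hPN inter_subset_left
  rcases lt_or_ge (sSup (S ∩ X N)) (sSup (X N)) with h | h
  · have := (hcopy N).2 (S ∩ X N) inter_subset_right hPN h
    rw [hsupeq]
    exact mem_iUnion.2 ⟨N, this⟩
  · have hXNbd : BddAbove (X N) := hubd.mono (subset_iUnion X N)
    have h1 : sSup (S ∩ X N) ≤ sSup (X N) := csSup_le_csSup hXNbd hPN inter_subset_right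
    have h2 : sSup (X N) = m N := by
      apply le_antisymm
      · exact csSup_le ⟨m N, hm N⟩ (hmtop N)
      · exact le_csSup hXNbd (hm N)
    rw [hsupeq, le_antisymm h1 h, h2]
    exact mem_iUnion.2 ⟨N, hm N⟩

theorem isClosedCopy_singleton (y : Ordinal.{u}) : IsClosedCopy {y} (1 : Ordinal.{u}) := by
  constructor
  · haveI h1 : Unique ↥(Iio (1 : Ordinal.{u})) := by
      refine ⟨⟨⟨0, by simp [mem_Iio]⟩⟩, ?_⟩
      rintro ⟨a, ha⟩
      apply Subtype.ext
      simpa [Ordinal.lt_one_iff_zero] using ha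
    haveI h2 : Unique ↥({y} : Set Ordinal) := uniqueSingleton y
    refine ⟨⟨Equiv.ofUnique _ _, ?_⟩⟩
    intro a b
    constructor
    · intro _; rw [Subsingleton.elim a b]
    · intro _; rw [Subsingleton.elim (Equiv.ofUnique _ _ a) (Equiv.ofUnique _ _ b)]
  · intro S hS hSne hlt
    have : S = {y} := Subset.antisymm hS (by
      obtain ⟨x, hx⟩ := hSne
      have := hS hx
      rw [mem_singleton_iff] at this
      subst this
      exact singleton_subset_iff.2 hx)
    rw [this] at hlt
    exact absurd hlt (lt_irrefl _)

theorem isClosedCopy_insert_top {X : Set Ordinal} {L y : Ordinal}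
    (h : IsClosedCopy X L) (htop : ∀ x ∈ X, x < y) (hsup : sSup X = y) :
    IsClosedCopy (insert y X) (L + 1) := by
  classical
  obtain ⟨⟨e⟩, hclosed⟩ := h
  have hyX : y ∉ X := fun hy => absurd (htop y hy) (lt_irrefl y)
  constructor
  · -- order copy
    let F : ↥(Iio (L + 1)) → ↥(insert y X) := fun v =>
      if hv : v.1 < L then ⟨(e.symm ⟨v.1, hv⟩).1, mem_insert_of_mem _ (e.symm ⟨v.1, hv⟩).2⟩
      else ⟨y, mem_insert _ _⟩
    have FL : ∀ (v : ↥(Iio (L+1))) (hv : v.1 < L), (F v).1 = (e.symm ⟨v.1, hv⟩).1 := by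
      intro v hv; simp only [F, dif_pos hv]
    have FnL : ∀ (v : ↥(Iio (L+1))), ¬(v.1 < L) → (F v).1 = y := by
      intro v hv; simp only [F, dif_neg hv]
    have Fmono : StrictMono F := by
      rintro ⟨v, hv⟩ ⟨v', hv'⟩ hvv
      have hvv' : v < v' := hvv
      show (F ⟨v, hv⟩).1 < (F ⟨v', hv'⟩).1
      by_cases h2 : v' < L
      · have h1 : v < L := hvv'.trans h2
        rw [FL _ h1, FL _ h2]
        have : (e.symm ⟨v, h1⟩) < (e.symm ⟨v', h2⟩) := by
          rw [OrderIso.lt_iff_lt]; exact Subtype.mk_lt_mk.2 hvv'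
        exact this
      · have hv'L : v' = L := le_antisymm (Order.lt_add_one_iff.1 hv') (le_of_not_gt h2)
        have h1 : v < L := hv'L ▸ hvv'
        rw [FL _ h1, FnL _ h2]
        exact htop _ (e.symm ⟨v, h1⟩).2
    have Fsurj : Function.Surjective F := by
      rintro ⟨x, hx⟩
      rcases mem_insert_iff.1 hx with rfl | hxX
      · refine ⟨⟨L, lt_add_one L⟩, ?_⟩
        apply Subtype.ext
        exact FnL _ (lt_irrefl L)
      · refine ⟨⟨(e ⟨x, hxX⟩).1, (e ⟨x, hxX⟩).2.trans (lt_add_one L)⟩, ?_⟩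
        apply Subtype.ext
        rw [FL _ (e ⟨x, hxX⟩).2]
        simp only [Subtype.eta, OrderIso.symm_apply_apply]
    exact ⟨(StrictMono.orderIsoOfSurjective F Fmono Fsurj).symm⟩
  · -- closedness
    have hbX : BddAbove X := ⟨y, fun x hx => (htop x hx).le⟩
    have hbins : BddAbove (insert y X) := ⟨y, by
      rintro x hx
      rcases mem_insert_iff.1 hx with rfl | hxX
      · exact le_rfl
      · exact (htop x hxX).le⟩
    have hsupins : sSup (insert y X) = y := by
      apply le_antisymm
      · apply csSup_le ⟨y, mem_insert y X⟩
        rintro x hx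
        rcases mem_insert_iff.1 hx with rfl | hxX
        · exact le_rfl
        · exact (htop x hxX).le
      · exact le_csSup hbins (mem_insert y X)
    intro S hS hSne hlt
    rw [hsupins] at hlt
    by_cases hyS : y ∈ S
    · exact absurd (le_csSup (hbins.mono hS) hyS) (not_le_of_gt hlt)
    · have hSX : S ⊆ X := by
        intro x hx
        rcases mem_insert_iff.1 (hS hx) with rfl | hxX
        · exact absurd hx hyS
        · exact hxX
      rw [← hsup] at hlt
      exact mem_insert_of_mem y (hclosed S hSX hSne hlt)

/-- Target order type of a topped closed copy extracted from rank `α`. -/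
def tgt (α : Ordinal.{u}) : Ordinal.{u} := if α = 0 then 1 else ω ^ α + 1

theorem tgt_pos (α : Ordinal.{u}) : 0 < tgt α := by
  unfold tgt; split
  · exact zero_lt_one
  · exact lt_of_lt_of_le (opow_pos α omega0_pos) (le_self_add)

theorem le_tgt (α : Ordinal.{u}) : ω ^ α ≤ tgt α := by
  unfold tgt; split
  · next h => rw [h, opow_zero]
  · exact le_self_add

theorem tgt_lt_opow {α α' : Ordinal.{u}} (h : α < α') : tgt α < ω ^ α' := by
  unfold tgt; split
  · calc (1 : Ordinal) < ω := one_lt_omega0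
      _ = ω ^ (1 : Ordinal) := (opow_one ω).symm
      _ ≤ ω ^ α' := opow_le_opow_right omega0_pos (by
          next h0 =>
          rw [h0] at h
          exact Order.one_le_iff_pos.2 h)
  · refine principal_add_omega0_opow α' ?_ ?_
    · exact (opow_lt_opow_iff_right one_lt_omega0).2 h
    · calc (1 : Ordinal) < ω := one_lt_omega0
        _ = ω ^ (1 : Ordinal) := (opow_one ω).symm
        _ ≤ ω ^ α' := opow_le_opow_right omega0_pos (Order.one_le_iff_pos.2
            ((show (0 : Ordinal) ≤ α from zero_le).trans_lt h))

/-- The main construction: from a point of rank `α`, extract a topped closed copy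
of `tgt α` above any given bound. -/
theorem constructCopy : ∀ α : Ordinal.{u}, α.card ≤ ℵ₀ →
    ∀ (A : Set Ordinal.{u}) (y β : Ordinal.{u}), y ∈ Dit A α → β < y → y.card ≤ ℵ₀ →
    ∃ X : Set Ordinal.{u}, X ⊆ A ∧ X ⊆ Ioc β y ∧ y ∈ X ∧ (∀ x ∈ X, x ≤ y) ∧
      IsClosedCopy X (tgt α) := by
  intro α
  induction α using Ordinal.induction with
  | _ α IH =>
    intro hαcard A y β hyA hβy hycard
    rcases eq_or_ne α 0 with rfl | hα0
    · refine ⟨{y}, singleton_subset_iff.2 (Dit_subset hyA), ?_, rfl, ?_, ?_⟩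
      · exact singleton_subset_iff.2 ⟨hβy, le_rfl⟩
      · intro x hx; rw [mem_singleton_iff] at hx; exact hx.le
      · rw [show tgt 0 = 1 from if_pos rfl]; exact isClosedCopy_singleton y
    -- α > 0
    have hαpos : 0 < α := pos_iff_ne_zero.2 hα0
    have hy0 : 0 < y := (show (0 : Ordinal) ≤ β from zero_le).trans_lt hβy
    obtain ⟨w, hwlt, hwcof⟩ := exists_cof_seq hy0 hycard
    -- the exponent sequence
    have hγ : ∃ γ : ℕ → Ordinal.{u}, (∀ n, γ n < α) ∧
        ((∃ ξ, α = ξ + 1 ∧ ∀ n, γ n = ξ) ∨ (Order.IsSuccLimit α ∧ ∀ ζ < α, ∃ n, ζ ≤ γ n)) := by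
      rcases Ordinal.zero_or_succ_or_isSuccLimit α with h0 | ⟨ξ, hξ⟩ | hlim
      · exact absurd h0 hα0
      · exact ⟨fun _ => ξ, fun _ => by rw [← hξ]; exact Order.lt_succ ξ,
          Or.inl ⟨ξ, hξ.symm, fun _ => rfl⟩⟩
      · obtain ⟨γ, hγlt, hγcof⟩ := exists_cof_seq hαpos hαcard
        exact ⟨γ, hγlt, Or.inr ⟨hlim, hγcof⟩⟩
    obtain ⟨γ, hγlt, hγcase⟩ := hγ
    -- one construction step
    have pick : ∀ (n : ℕ) (uu : Ordinal.{u}), uu < y → {p : Set Ordinal.{u} × Ordinal.{u} //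
        p.1 ⊆ A ∧ p.1 ⊆ Ioc (max uu (w n)) p.2 ∧ p.2 ∈ p.1 ∧ (∀ x ∈ p.1, x ≤ p.2) ∧
          IsClosedCopy p.1 (tgt (γ n)) ∧ p.2 < y} := by
      intro n uu huu
      apply Classical.indefiniteDescription
      have hu'y : max uu (w n) < y := max_lt huu (hwlt n)
      obtain ⟨z, hzD, hz1, hz2⟩ := (mem_Dit.1 hyA).2 (γ n) (hγlt n) (max uu (w n)) hu'y
      have hzcard : z.card ≤ ℵ₀ := (card_le_card hz2.le).trans hycard
      have hγcard : (γ n).card ≤ ℵ₀ := (card_le_card (hγlt n).le).trans hαcard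
      obtain ⟨X', hX'A, hX'Ioc, hX'z, hX'top, hX'copy⟩ :=
        IH (γ n) (hγlt n) hγcard A z (max uu (w n)) hzD hz1 hzcard
      exact ⟨(X', z), hX'A, hX'Ioc, hX'z, hX'top, hX'copy, hz2⟩
    -- the recursive sequence of blocks
    let seq : ∀ n : ℕ, Σ' (uu : Ordinal.{u}) (_ : uu < y),
        {p : Set Ordinal.{u} × Ordinal.{u} //
          p.1 ⊆ A ∧ p.1 ⊆ Ioc (max uu (w n)) p.2 ∧ p.2 ∈ p.1 ∧ (∀ x ∈ p.1, x ≤ p.2) ∧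
          IsClosedCopy p.1 (tgt (γ n)) ∧ p.2 < y} := fun n =>
      Nat.rec ⟨β, hβy, pick 0 β hβy⟩
        (fun n prev => ⟨prev.2.2.val.2, prev.2.2.prop.2.2.2.2.2,
          pick (n + 1) prev.2.2.val.2 prev.2.2.prop.2.2.2.2.2⟩) n
    let ub : ℕ → Ordinal.{u} := fun n => (seq n).1
    let Xb : ℕ → Set Ordinal.{u} := fun n => (seq n).2.2.val.1
    let zb : ℕ → Ordinal.{u} := fun n => (seq n).2.2.val.2
    have hub0 : ub 0 = β := rfl
    have hubs : ∀ n, ub (n + 1) = zb n := fun n => rfl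
    have huby : ∀ n, ub n < y := fun n => (seq n).2.1
    have hXA : ∀ n, Xb n ⊆ A := fun n => (seq n).2.2.prop.1
    have hXIoc : ∀ n, Xb n ⊆ Ioc (max (ub n) (w n)) (zb n) := fun n => (seq n).2.2.prop.2.1
    have hzX : ∀ n, zb n ∈ Xb n := fun n => (seq n).2.2.prop.2.2.1
    have hXtop : ∀ n, ∀ x ∈ Xb n, x ≤ zb n := fun n => (seq n).2.2.prop.2.2.2.1
    have hXcopy : ∀ n, IsClosedCopy (Xb n) (tgt (γ n)) := fun n => (seq n).2.2.prop.2.2.2.2.1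
    have hzy : ∀ n, zb n < y := fun n => (seq n).2.2.prop.2.2.2.2.2
    have hwz : ∀ n, w n < zb n := fun n =>
      (le_max_right _ _).trans_lt (hXIoc n (hzX n)).1
    have huz : ∀ n, ub n < zb n := fun n =>
      (le_max_left _ _).trans_lt (hXIoc n (hzX n)).1
    have hβub : ∀ n, β ≤ ub n := by
      intro n
      induction n with
      | zero => rw [hub0]
      | succ k IHk => rw [hubs k]; exact IHk.trans (huz k).le
    have hsep : ∀ n, ∀ x ∈ Xb (n + 1), zb n < x := by
      intro n x hx
      have := (hXIoc (n + 1) hx).1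
      calc zb n = ub (n + 1) := (hubs n).symm
        _ ≤ max (ub (n + 1)) (w (n + 1)) := le_max_left _ _
        _ < x := this
    -- partial sums
    let s : ℕ → Ordinal.{u} := fun n =>
      Nat.rec (motive := fun _ => Ordinal.{u}) 0 (fun k acc => acc + tgt (γ k)) n
    have hs0 : s 0 = 0 := rfl
    have hss : ∀ n, s (n + 1) = s n + tgt (γ n) := fun n => rfl
    obtain ⟨hUcopy, hUsup⟩ := glue Xb (fun n => tgt (γ n)) zb s hs0 hss
      (fun n => tgt_pos (γ n)) hXcopy hzX hXtop hsep
    -- the supremum of partial sums is ω^α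
    have hslt : ∀ n, s n < ω ^ α := by
      intro n
      induction n with
      | zero => rw [hs0]; exact opow_pos α omega0_pos
      | succ k IHk =>
        rw [hss]
        exact principal_add_omega0_opow α IHk (tgt_lt_opow (hγlt k))
    have hsbd : BddAbove (Set.range s) := Ordinal.bddAbove_range s
    have hsup_s : (⨆ n, s n) = ω ^ α := by
      apply le_antisymm
      · exact ciSup_le fun n => (hslt n).le
      · by_contra hc
        push_neg at hc
        rcases hγcase with ⟨ξ, hαξ, hγξ⟩ | ⟨hlim, hcof⟩
        · -- successor case : s n ≥ ω^ξ * n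
          have hsn : ∀ n : ℕ, ω ^ ξ * n ≤ s n := by
            intro n
            induction n with
            | zero => simp
            | succ k IHk =>
              rw [hss, hγξ k, Nat.cast_succ, mul_add, mul_one]
              exact add_le_add IHk (le_tgt ξ)
          have hωα : (ω : Ordinal.{u}) ^ α = ω ^ ξ * ω := by
            rw [hαξ, opow_add, opow_one]
          rw [hωα] at hc
          obtain ⟨c', hc'ω, hcc'⟩ := (lt_mul_iff_of_isSuccLimit isSuccLimit_omega0).1 hc
          obtain ⟨n, rfl⟩ := Ordinal.lt_omega0.1 hc'ω
          exact absurd ((hcc'.trans_le (hsn n)).trans_le (le_ciSup hsbd n)) (lt_irrefl _)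
        · -- limit case
          obtain ⟨ζ, hζα, hvζ⟩ := (lt_opow_of_isSuccLimit omega0_ne_zero hlim).1 hc
          obtain ⟨n, hn⟩ := hcof ζ hζα
          have : (⨆ n, s n) < s (n + 1) := by
            calc (⨆ n, s n) < ω ^ ζ := hvζ
              _ ≤ ω ^ γ n := opow_le_opow_right omega0_pos hn
              _ ≤ tgt (γ n) := le_tgt (γ n)
              _ ≤ s (n + 1) := by rw [hss]; exact le_add_self
          exact absurd this (not_lt_of_ge (le_ciSup hsbd (n + 1)))
    -- sup of the tops is y
    have hzbd : BddAbove (Set.range zb) := Ordinal.bddAbove_range zb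
    have hsup_z : (⨆ n, zb n) = y := by
      apply le_antisymm
      · exact ciSup_le fun n => (hzy n).le
      · by_contra hc
        push_neg at hc
        obtain ⟨n, hn⟩ := hwcof _ hc
        exact absurd ((hn.trans_lt (hwz n)).trans_le (le_ciSup hzbd n)) (lt_irrefl _)
    -- assemble
    have hUsub : ∀ x ∈ ⋃ n, Xb n, x < y := by
      intro x hx
      obtain ⟨n, hn⟩ := mem_iUnion.1 hx
      exact (hXtop n x hn).trans_lt (hzy n)
    rw [hsup_s] at hUcopy
    rw [hsup_z] at hUsup
    have hfinal := isClosedCopy_insert_top hUcopy hUsub hUsup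
    refine ⟨insert y (⋃ n, Xb n), ?_, ?_, mem_insert _ _, ?_, ?_⟩
    · rintro x hx
      rcases mem_insert_iff.1 hx with rfl | hxU
      · exact Dit_subset hyA
      · obtain ⟨n, hn⟩ := mem_iUnion.1 hxU
        exact hXA n hn
    · rintro x hx
      rcases mem_insert_iff.1 hx with rfl | hxU
      · exact ⟨hβy, le_rfl⟩
      · obtain ⟨n, hn⟩ := mem_iUnion.1 hxU
        refine ⟨?_, (hUsub x hxU).le⟩
        calc β ≤ ub n := hβub n
          _ ≤ max (ub n) (w n) := le_max_left _ _
          _ < x := (hXIoc n hn).1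
    · rintro x hx
      rcases mem_insert_iff.1 hx with rfl | hxU
      · exact le_rfl
      · exact (hUsub x hxU).le
    · rw [show tgt α = ω ^ α + 1 from if_neg hα0]
      exact hfinal

end Stmt6

open Stmt6

/-- for countable nonzero `β` and finite `k`,
`ω^(ω^β) →_cl (ω^(ω^β))¹_k`. -/
theorem stmt6 (b : Ordinal) (hb0 : b ≠ 0) (hb : b.card ≤ Cardinal.aleph0)
    (k : ℕ) (hk : 0 < k) :
    ToClosed1 ((ω : Ordinal) ^ (ω : Ordinal) ^ b) ((ω : Ordinal) ^ (ω : Ordinal) ^ b) k := by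
  classical
  intro c
  set a : Ordinal := (ω : Ordinal) ^ (ω : Ordinal) ^ b with ha
  have hacard : a.card ≤ ℵ₀ := card_opow_le (card_opow_le hb)
  have hωbcard : ((ω : Ordinal) ^ b).card ≤ ℵ₀ := card_opow_le hb
  have hωbpos : (0 : Ordinal) < ω ^ b := opow_pos b omega0_pos
  have hωblim : Order.IsSuccLimit ((ω : Ordinal) ^ b) := isSuccLimit_opow_left isSuccLimit_omega0 hb0
  have hapos : (0 : Ordinal) < a := opow_pos _ omega0_pos
  set A : Fin k → Set Ordinal := fun i => {x | x < a ∧ c x = i} with hA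
  -- step 1 : a good color exists
  have hgood : ∃ i : Fin k, ∀ γ < (ω : Ordinal) ^ b, ∀ uu < a,
      ∃ z, z ∈ Dit (A i ∩ Ioo uu a) γ := by
    by_contra hc
    push_neg at hc
    choose γf hγf uf huf hempty using hc
    haveI : Nonempty (Fin k) := ⟨⟨0, hk⟩⟩
    set γs : Ordinal := Finset.univ.sup γf with hγs
    set us : Ordinal := Finset.univ.sup uf with hus
    have hγslt : γs < ω ^ b := by
      rw [hγs]
      refine Finset.sup_lt_iff hωbpos |>.2 fun i _ => hγf i
    have huslt : us < a := by
      rw [hus]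
      refine Finset.sup_lt_iff hapos |>.2 fun i _ => huf i
    have hempty' : ∀ i : Fin k, ∀ z, z ∉ Dit (A i ∩ Ioo us a) γs := by
      intro i z hz
      apply hempty i z
      refine Dit_anti (Finset.le_sup (Finset.mem_univ i)) (Dit_mono ?_ hz)
      exact inter_subset_inter_right _ (Ioo_subset_Ioo_left (Finset.le_sup (Finset.mem_univ i)))
    set As : ℕ → Set Ordinal := fun n => if h : n < k then A ⟨n, h⟩ ∩ Ioo us a else ∅ with hAs
    have hAsempty : ∀ n, ∀ z, z ∉ Dit (As n) γs := by
      intro n z hz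
      simp only [hAs] at hz
      by_cases h : n < k
      · rw [dif_pos h] at hz
        exact hempty' ⟨n, h⟩ z hz
      · rw [dif_neg h] at hz
        exact absurd (Dit_subset hz) (notMem_empty z)
    set Δ : ℕ → Ordinal := fun n =>
      Nat.rec (motive := fun _ => Ordinal) 0 (fun _ acc => acc ♯ γs) n with hΔ
    have hkeyU := keyU Δ rfl (fun n => rfl) hAsempty k
    have hΔlt : Δ k < ω ^ b := by
      have : ∀ n, Δ n < ω ^ b := by
        intro n
        induction n with
        | zero => exact hωbpos
        | succ m IHm => exact nadd_lt_omega0_opow IHm hγslt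
      exact this k
    have hunion : (⋃ i ∈ Finset.range k, As i) = Ioo us a := by
      apply Subset.antisymm
      · intro x hx
        simp only [mem_iUnion] at hx
        obtain ⟨n, hn, hx⟩ := hx
        simp only [hAs] at hx
        by_cases h : n < k
        · rw [dif_pos h] at hx; exact hx.2
        · rw [dif_neg h] at hx; exact absurd hx (notMem_empty x)
      · intro x hx
        have hxa : x < a := hx.2
        refine mem_iUnion.2 ⟨(c x).1, mem_iUnion.2 ⟨Finset.mem_range.2 (c x).2, ?_⟩⟩
        simp only [hAs]
        rw [dif_pos (c x).2]
        exact ⟨⟨hxa, by rw [Fin.eta]⟩, hx⟩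
    -- the point us + ω^(Δ k) has rank Δ k in Ioo us a
    set z₀ : Ordinal := us + ω ^ (Δ k) with hz₀
    have hz₀a : z₀ < a := by
      rw [hz₀, ha]
      exact principal_add_omega0_opow _ huslt
        ((opow_lt_opow_iff_right one_lt_omega0).2 hΔlt)
    have h1 : z₀ ∈ Dit (Ioi us) (Δ k) := add_opow_mem_Dit (Δ k) us
    have h2 : z₀ ∈ Dit (Ioi us ∩ Iic z₀) (Δ k) := Dit_inter_Iic h1
    have h3 : z₀ ∈ Dit (Ioo us a) (Δ k) := by
      refine Dit_mono ?_ h2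
      rw [Ioi_inter_Iic]
      exact Ioc_subset_Ioo_right hz₀a
    rw [← hunion] at h3
    exact hkeyU z₀ h3
  obtain ⟨i, hgood⟩ := hgood
  -- step 2 : build the closed copy inside color class i
  obtain ⟨γT, hγTlt, hγTcof⟩ := exists_cof_seq hωbpos hωbcard
  have pick : ∀ (n : ℕ) (uu : Ordinal), uu < a → {p : Set Ordinal × Ordinal //
      p.1 ⊆ A i ∧ p.1 ⊆ Ioc uu p.2 ∧ p.2 ∈ p.1 ∧ (∀ x ∈ p.1, x ≤ p.2) ∧
        IsClosedCopy p.1 (tgt (γT n)) ∧ p.2 < a} := by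
    intro n uu huu
    apply Classical.indefiniteDescription
    obtain ⟨z, hz⟩ := hgood (γT n) (hγTlt n) uu huu
    have hzmem := Dit_subset hz
    have hzu : uu < z := hzmem.2.1
    have hza : z < a := hzmem.2.2
    have hγcard : (γT n).card ≤ ℵ₀ := (card_le_card (hγTlt n).le).trans hωbcard
    have hzcard : z.card ≤ ℵ₀ := (card_le_card hza.le).trans hacard
    obtain ⟨X, hXsub, hXIoc, hXz, hXtop, hXcopy⟩ :=
      constructCopy (γT n) hγcard (A i ∩ Ioo uu a) z uu hz hzu hzcard
    exact ⟨(X, z), (hXsub.trans inter_subset_left), hXIoc, hXz, hXtop, hXcopy, hza⟩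
  let seq : ∀ n : ℕ, Σ' (uu : Ordinal) (_ : uu < a),
      {p : Set Ordinal × Ordinal //
        p.1 ⊆ A i ∧ p.1 ⊆ Ioc uu p.2 ∧ p.2 ∈ p.1 ∧ (∀ x ∈ p.1, x ≤ p.2) ∧
        IsClosedCopy p.1 (tgt (γT n)) ∧ p.2 < a} := fun n =>
    Nat.rec ⟨0, hapos, pick 0 0 hapos⟩
      (fun n prev => ⟨prev.2.2.val.2, prev.2.2.prop.2.2.2.2.2,
        pick (n + 1) prev.2.2.val.2 prev.2.2.prop.2.2.2.2.2⟩) n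
  let ub : ℕ → Ordinal := fun n => (seq n).1
  let Xb : ℕ → Set Ordinal := fun n => (seq n).2.2.val.1
  let zb : ℕ → Ordinal := fun n => (seq n).2.2.val.2
  have hubs : ∀ n, ub (n + 1) = zb n := fun n => rfl
  have hXA : ∀ n, Xb n ⊆ A i := fun n => (seq n).2.2.prop.1
  have hXIoc : ∀ n, Xb n ⊆ Ioc (ub n) (zb n) := fun n => (seq n).2.2.prop.2.1
  have hzX : ∀ n, zb n ∈ Xb n := fun n => (seq n).2.2.prop.2.2.1
  have hXtop : ∀ n, ∀ x ∈ Xb n, x ≤ zb n := fun n => (seq n).2.2.prop.2.2.2.1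
  have hXcopy : ∀ n, IsClosedCopy (Xb n) (tgt (γT n)) := fun n => (seq n).2.2.prop.2.2.2.2.1
  have hza : ∀ n, zb n < a := fun n => (seq n).2.2.prop.2.2.2.2.2
  have hsep : ∀ n, ∀ x ∈ Xb (n + 1), zb n < x := by
    intro n x hx
    have := (hXIoc (n + 1) hx).1
    rwa [hubs n] at this
  let s : ℕ → Ordinal := fun n =>
    Nat.rec (motive := fun _ => Ordinal) 0 (fun m acc => acc + tgt (γT m)) n
  obtain ⟨hUcopy, hUsup⟩ := glue Xb (fun n => tgt (γT n)) zb s rfl (fun n => rfl)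
    (fun n => tgt_pos (γT n)) hXcopy hzX hXtop hsep
  have hsbd : BddAbove (Set.range s) := Ordinal.bddAbove_range s
  have hslt : ∀ n, s n < a := by
    intro n
    induction n with
    | zero => exact hapos
    | succ m IHm =>
      show s m + tgt (γT m) < a
      exact principal_add_omega0_opow _ IHm (tgt_lt_opow (hγTlt m))
  have hsup_s : (⨆ n, s n) = a := by
    apply le_antisymm
    · exact ciSup_le fun n => (hslt n).le
    · by_contra hc
      push_neg at hc
      obtain ⟨ζ, hζ, hvζ⟩ := (lt_opow_of_isSuccLimit omega0_ne_zero hωblim).1 hc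
      obtain ⟨n, hn⟩ := hγTcof ζ hζ
      have : (⨆ n, s n) < s (n + 1) := by
        calc (⨆ n, s n) < ω ^ ζ := hvζ
          _ ≤ ω ^ γT n := opow_le_opow_right omega0_pos hn
          _ ≤ tgt (γT n) := le_tgt (γT n)
          _ ≤ s (n + 1) := le_add_self
      exact absurd this (not_lt_of_ge (le_ciSup hsbd (n + 1)))
  rw [hsup_s] at hUcopy
  refine ⟨i, ⋃ n, Xb n, ?_, ?_, hUcopy⟩
  · intro x hx
    obtain ⟨n, hn⟩ := mem_iUnion.1 hx
    exact mem_Iio.2 ((hXtop n x hn).trans_lt (hza n))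
  · intro x hx
    obtain ⟨n, hn⟩ := mem_iUnion.1 hx
    exact (hXA n hn).2

end
end

section
/- ω²·2 + ω + 1 ↛_cl (ω+2, 3)²: there exists a coloring c of the pairs from ω²·2+ω+1 with colors red and blue such that there is no blue triangle (3 points with all pairs blue) and no red-homogeneous subset that is order-isomorphic to ω+2 and closed in its supremum. -/
open Ordinal Set

noncomputable section

/-! ### Auxiliary material for `stmt7` -/

open scoped Classical

/-- The nine blocks used for the coloring. -/
inductive Blk : Type
  | SE | SO | LEv | LOv | P | D | E | Q | G
  deriving DecidableEq

instance : Fintype Blk :=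
  Fintype.ofList [Blk.SE, Blk.SO, Blk.LEv, Blk.LOv, Blk.P, Blk.D, Blk.E, Blk.Q, Blk.G]
    (fun x => by cases x <;> simp)

open Blk in
/-- Adjacency of the (symmetric, irreflexive, triangle-free) graph on the blocks. -/
def blkAdj : Blk → Blk → Bool
  | SE, LOv | LOv, SE => true
  | SO, LEv | LEv, SO => true
  | P, SE | SE, P => true
  | P, SO | SO, P => true
  | P, D | D, P => true
  | P, Q | Q, P => true
  | D, E | E, D => true
  | LOv, E | E, LOv => true
  | LEv, E | E, LEv => true
  | LOv, G | G, LOv => true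
  | LEv, G | G, LEv => true
  | Q, G | G, Q => true
  | _, _ => false

lemma blkAdj_symm : ∀ u v, blkAdj u v = blkAdj v u := by decide

lemma blkAdj_tri : ∀ u v w, blkAdj u v = true → blkAdj v w = true →
    blkAdj u w = true → False := by decide

/-- Which block an ordinal belongs to. -/
noncomputable def blkOf (α : Ordinal) : Blk :=
  if α < ω * ω then
    if ω ∣ α ∧ α ≠ 0 then (if Even (α / ω) then Blk.LEv else Blk.LOv)
    else (if Even (α / ω) then Blk.SE else Blk.SO)
  else if α = ω * ω then Blk.P
  else if α < ω * ω * 2 then (if ω ∣ α then Blk.E else Blk.D)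
  else if α = ω * ω * 2 then Blk.Q
  else Blk.G

lemma even_natCast_iff (k : ℕ) : Even ((k : Ordinal)) ↔ Even k := by
  constructor
  · rintro ⟨r, hr⟩
    have hrω : r < ω := lt_of_le_of_lt (hr ▸ (le_self_add : r ≤ r + r)) (nat_lt_omega0 k)
    obtain ⟨j, rfl⟩ := lt_omega0.1 hrω
    refine ⟨j, ?_⟩
    exact_mod_cast hr
  · rintro ⟨j, hj⟩
    exact ⟨(j : Ordinal), by rw [hj]; push_cast; rfl⟩

lemma blkOf_succ0 (k : ℕ) (m : Ordinal) (hm0 : m ≠ 0) (hmω : m < ω) :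
    blkOf (ω * (k : Ordinal) + m) = if Even k then Blk.SE else Blk.SO := by
  have hlt : ω * (k : Ordinal) + m < ω * ω := by
    have h1 : ω * (k : Ordinal) + m < ω * (k : Ordinal) + ω :=
      (add_lt_add_iff_left _).2 hmω
    have h2 : ω * (k : Ordinal) + ω = ω * ((k : Ordinal) + 1) := by
      rw [mul_add, mul_one]
    have h3 : ω * ((k : Ordinal) + 1) ≤ ω * ω := by
      apply mul_le_mul_right
      have h4 := nat_lt_omega0 (k + 1)
      push_cast at h4
      exact h4.le
    exact h1.trans_le (h2 ▸ h3)
  have hmod : (ω * (k : Ordinal) + m) % ω = m := by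
    rw [Ordinal.mul_add_mod_self, Ordinal.mod_eq_of_lt hmω]
  have hnd : ¬ (ω ∣ (ω * (k : Ordinal) + m) ∧ (ω * (k : Ordinal) + m) ≠ 0) := by
    rintro ⟨hd, -⟩
    rw [Ordinal.dvd_iff_mod_eq_zero, hmod] at hd
    exact hm0 hd
  have hdiv : (ω * (k : Ordinal) + m) / ω = (k : Ordinal) := by
    rw [Ordinal.mul_add_div _ omega0_ne_zero, Ordinal.div_eq_zero_of_lt hmω, add_zero]
  unfold blkOf
  rw [if_pos hlt, if_neg hnd, hdiv]
  by_cases hk : Even k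
  · rw [if_pos ((even_natCast_iff k).2 hk), if_pos hk]
  · rw [if_neg (fun hcon => hk ((even_natCast_iff k).1 hcon)), if_neg hk]

lemma blkOf_lim0 (k : ℕ) :
    blkOf (ω * ((k : Ordinal) + 1)) = if Even (k + 1) then Blk.LEv else Blk.LOv := by
  have hk1 : ((k : Ordinal) + 1) = ((k + 1 : ℕ) : Ordinal) := by push_cast; rfl
  have hlt : ω * ((k : Ordinal) + 1) < ω * ω := by
    apply (mul_lt_mul_iff_right₀ omega0_pos).2
    rw [hk1]; exact nat_lt_omega0 _
  have hdvd : ω ∣ ω * ((k : Ordinal) + 1) ∧ ω * ((k : Ordinal) + 1) ≠ 0 := by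
    refine ⟨Dvd.intro _ rfl, ?_⟩
    apply ne_of_gt
    apply mul_pos omega0_pos
    exact lt_of_lt_of_le zero_lt_one (le_add_of_nonneg_left zero_le)
  have hdiv : ω * ((k : Ordinal) + 1) / ω = ((k : Ordinal) + 1) :=
    Ordinal.mul_div_cancel _ omega0_ne_zero
  unfold blkOf
  rw [if_pos hlt, if_pos hdvd, hdiv]
  by_cases hk : Even (k + 1)
  · rw [if_pos (by rw [hk1]; exact (even_natCast_iff _).2 hk), if_pos hk]
  · rw [if_neg (by rw [hk1]; exact fun hcon => hk ((even_natCast_iff _).1 hcon)), if_neg hk]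

lemma blkOf_low (α : Ordinal) (h : α < ω * ω) :
    blkOf α = Blk.SE ∨ blkOf α = Blk.SO ∨ blkOf α = Blk.LEv ∨ blkOf α = Blk.LOv := by
  unfold blkOf
  rw [if_pos h]
  split_ifs <;> simp

lemma blkOf_P : blkOf (ω * ω) = Blk.P := by
  unfold blkOf
  rw [if_neg (lt_irrefl _), if_pos rfl]

lemma blkOf_mid (α : Ordinal) (h1 : ω * ω < α) (h2 : α < ω * ω * 2) :
    blkOf α = if ω ∣ α then Blk.E else Blk.D := by
  unfold blkOf
  rw [if_neg (not_lt.2 h1.le), if_neg (ne_of_gt h1), if_pos h2]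

lemma blkOf_Q : blkOf (ω * ω * 2) = Blk.Q := by
  have h1 : ¬ (ω * ω * 2 < ω * ω) :=
    not_lt.2 (Ordinal.le_mul_left (ω * ω) (by norm_num))
  have h2 : ω * ω ≠ ω * ω * 2 := by
    apply ne_of_lt
    nth_rewrite 1 [← mul_one (ω * ω)]
    exact (mul_lt_mul_iff_right₀ (mul_pos omega0_pos omega0_pos)).2 (by norm_num)
  unfold blkOf
  rw [if_neg h1, if_neg h2.symm, if_neg (lt_irrefl _), if_pos rfl]

lemma blkOf_G (α : Ordinal) (h : ω * ω * 2 < α) : blkOf α = Blk.G := by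
  have h0 : ω * ω < ω * ω * 2 := by
    nth_rewrite 1 [← mul_one (ω * ω)]
    exact (mul_lt_mul_iff_right₀ (mul_pos omega0_pos omega0_pos)).2 (by norm_num)
  unfold blkOf
  rw [if_neg (not_lt.2 (h0.trans h).le), if_neg (ne_of_gt (h0.trans h)),
    if_neg (not_lt.2 h.le), if_neg (ne_of_gt h)]

/-- If every element strictly below `w` has its successor strictly below `w`
(and `w ≠ 0`), then `ω` divides `w`. -/
lemma omega_dvd_of_limitlike (w : Ordinal) (hw0 : w ≠ 0)
    (hwl : ∀ γ < w, γ + 1 < w) : ω ∣ w := by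
  rw [Ordinal.dvd_iff_mod_eq_zero]
  by_contra hr
  have hrlt : w % ω < ω := Ordinal.mod_lt w omega0_ne_zero
  obtain ⟨n, hn⟩ := lt_omega0.1 hrlt
  have hn0 : n ≠ 0 := by
    rintro rfl
    rw [Nat.cast_zero] at hn
    exact hr hn
  obtain ⟨j, rfl⟩ := Nat.exists_eq_succ_of_ne_zero hn0
  have hw : ω * (w / ω) + ((j : Ordinal) + 1) = w := by
    have h0 := Ordinal.div_add_mod w ω
    rw [hn] at h0
    push_cast at h0
    exact h0
  have hγlt : ω * (w / ω) + (j : Ordinal) < w := by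
    conv_rhs => rw [← hw]
    rw [← add_assoc]
    exact lt_add_one (ω * (w / ω) + (j : Ordinal))
  have h2 := hwl _ hγlt
  rw [add_assoc, hw] at h2
  exact lt_irrefl _ h2

/-- `ω²·2 + ω + 1 ↛_cl (ω+2, 3)²`. -/
theorem stmt7 :
    ¬ ToClosed2 ((ω : Ordinal) ^ (2 : Ordinal) * 2 + ω + 1) (ω + 2) 3 := by
  intro h
  have hpow : (ω : Ordinal) ^ (2 : Ordinal) = ω * ω := by
    rw [show (2 : Ordinal) = 1 + 1 from one_add_one_eq_two.symm, opow_add, opow_one]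
  have hβ : (ω : Ordinal) ^ (2 : Ordinal) * 2 + ω + 1 = ω * ω * 2 + ω + 1 := by rw [hpow]
  rcases h (fun a b => !(blkAdj (blkOf a) (blkOf b))) with
    ⟨X, hXsub, ⟨⟨e⟩, hcl⟩, hom⟩ | ⟨H, hHsub, hcard, hblue⟩
  · -- red closed copy of ω+2 : contradiction
    have hω2 : (ω : Ordinal) < ω + 2 :=
      lt_of_lt_of_le (lt_add_one ω) (add_le_add_right one_le_two ω)
    have hωmem : (ω : Ordinal) ∈ Iio ((ω : Ordinal) + 2) := hω2
    have hω1mem : (ω : Ordinal) + 1 ∈ Iio ((ω : Ordinal) + 2) :=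
      add_lt_add_right one_lt_two ω
    have hzv : ∀ n : ℕ, ((n : Ordinal)) ∈ Iio ((ω : Ordinal) + 2) :=
      fun n => (nat_lt_omega0 n).trans hω2
    set y : Ordinal := ↑(e.symm ⟨(ω : Ordinal) + 1, hω1mem⟩) with hydef
    set x : Ordinal := ↑(e.symm ⟨(ω : Ordinal), hωmem⟩) with hxdef
    set z : ℕ → Ordinal := fun n => ↑(e.symm ⟨(n : Ordinal), hzv n⟩) with hzdef
    have hyX : y ∈ X := (e.symm _).2
    have hxX : x ∈ X := (e.symm _).2
    have hzX : ∀ n, z n ∈ X := fun n => (e.symm _).2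
    have emono : ∀ {v w : (Iio ((ω : Ordinal) + 2) : Set Ordinal)}, v < w →
        ((e.symm v : Ordinal)) < ((e.symm w : Ordinal)) := by
      intro v w hvw
      have h1 := e.symm.lt_iff_lt.2 hvw
      exact_mod_cast h1
    have hxy : x < y := emono (Subtype.mk_lt_mk.2 (lt_add_one ω))
    have hzx : ∀ n, z n < x := fun n => emono (Subtype.mk_lt_mk.2 (nat_lt_omega0 n))
    have hzz : ∀ n, z n < z (n + 1) :=
      fun n => emono (Subtype.mk_lt_mk.2 (by exact_mod_cast Nat.lt_succ_self n))
    have hmem : ∀ u, u ∈ X → (∃ n : ℕ, u = z n) ∨ u = x ∨ u = y := by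
      intro u hu
      have hv : ((e.symm (e ⟨u, hu⟩) : X) : Ordinal) = u := by
        rw [e.symm_apply_apply]
      have hv2 : ((e ⟨u, hu⟩ : Iio ((ω : Ordinal) + 2)) : Ordinal) < (ω + 1) + 1 := by
        have h2 : ((e ⟨u, hu⟩ : Iio ((ω : Ordinal) + 2)) : Ordinal) < ω + 2 := (e ⟨u, hu⟩).2
        exact h2.trans_eq (by rw [add_assoc, one_add_one_eq_two])
      rw [Ordinal.add_one_eq_succ, Order.lt_succ_iff] at hv2
      rcases hv2.lt_or_eq with hlt | heq
      · rw [Ordinal.add_one_eq_succ, Order.lt_succ_iff] at hlt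
        rcases hlt.lt_or_eq with hlt2 | heq2
        · obtain ⟨n, hn⟩ := lt_omega0.1 hlt2
          refine Or.inl ⟨n, ?_⟩
          have hsub : e ⟨u, hu⟩ =
              (⟨(n : Ordinal), hzv n⟩ : (Iio ((ω : Ordinal) + 2) : Set Ordinal)) :=
            Subtype.ext hn
          exact hv.symm.trans
            (congrArg (fun w : (Iio ((ω : Ordinal) + 2) : Set Ordinal) =>
              ((e.symm w : X) : Ordinal)) hsub)
        · refine Or.inr (Or.inl ?_)
          have hsub : e ⟨u, hu⟩ =
              (⟨(ω : Ordinal), hωmem⟩ : (Iio ((ω : Ordinal) + 2) : Set Ordinal)) :=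
            Subtype.ext heq2
          exact hv.symm.trans
            (congrArg (fun w : (Iio ((ω : Ordinal) + 2) : Set Ordinal) =>
              ((e.symm w : X) : Ordinal)) hsub)
      · refine Or.inr (Or.inr ?_)
        have hsub : e ⟨u, hu⟩ =
            (⟨(ω : Ordinal) + 1, hω1mem⟩ : (Iio ((ω : Ordinal) + 2) : Set Ordinal)) :=
          Subtype.ext heq
        exact hv.symm.trans
          (congrArg (fun w : (Iio ((ω : Ordinal) + 2) : Set Ordinal) =>
            ((e.symm w : X) : Ordinal)) hsub)
    set S : Set Ordinal := X ∩ Iio x with hSdef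
    have hSsub : S ⊆ X := inter_subset_left
    have hzS : ∀ n, z n ∈ S := fun n => ⟨hzX n, hzx n⟩
    have hSne : S.Nonempty := ⟨z 0, hzS 0⟩
    have hSbdd : BddAbove S := ⟨x, fun u hu => hu.2.le⟩
    have hXbdd : BddAbove X := ⟨(ω : Ordinal) ^ (2 : Ordinal) * 2 + ω + 1,
      fun u hu => (hXsub hu).le⟩
    have hyub : ∀ u ∈ X, u ≤ y := by
      intro u hu
      rcases hmem u hu with ⟨n, rfl⟩ | rfl | rfl
      · exact ((hzx n).trans hxy).le
      · exact hxy.le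
      · exact le_rfl
    have hsupX : sSup X = y := le_antisymm (csSup_le ⟨y, hyX⟩ hyub) (le_csSup hXbdd hyX)
    have hsupS : sSup S = x := by
      rcases (csSup_le hSne (fun u hu => hu.2.le)).lt_or_eq with hlt | hEq
      · exfalso
        have h1 : sSup S < sSup X := by rw [hsupX]; exact hlt.trans hxy
        have h2 : sSup S ∈ X := hcl S hSsub hSne h1
        rcases hmem _ h2 with ⟨n, hn⟩ | hn | hn
        · have h3 : z (n + 1) ≤ sSup S := le_csSup hSbdd (hzS (n + 1))
          rw [hn] at h3
          exact absurd (hzz n) (not_lt.2 h3)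
        · exact hlt.ne hn
        · exact absurd (hn ▸ hlt) (not_lt.2 hxy.le)
      · exact hEq
    have hcof : ∀ γ < x, ∃ u ∈ S, γ < u := by
      intro γ hγ
      by_contra hcon
      push_neg at hcon
      have h1 := csSup_le hSne hcon
      rw [hsupS] at h1
      exact hγ.not_ge h1
    have hxlim : ∀ γ < x, γ + 1 < x := by
      intro γ hγ
      obtain ⟨u, huS, hu⟩ := hcof γ hγ
      have h1 : γ + 1 ≤ u := by rw [Ordinal.add_one_eq_succ, Order.succ_le_iff]; exact hu
      exact h1.trans_lt huS.2
    have hx0 : x ≠ 0 := by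
      rintro h0
      exact not_lt_zero (h0 ▸ hzx 0)
    have blue : ∀ u ∈ X, ∀ v ∈ X, u < v → blkAdj (blkOf u) (blkOf v) = true → False := by
      intro u hu v hv huv hadj
      have h1 : (!(blkAdj (blkOf u) (blkOf v))) = true := hom u hu v hv huv
      rw [hadj] at h1
      simp at h1
    have hyβ : y < ω * ω * 2 + ω + 1 := by
      have h1 := hXsub hyX
      rwa [mem_Iio, hβ] at h1
    have hyβ' : y ≤ ω * ω * 2 + ω := by
      rwa [Ordinal.add_one_eq_succ, Order.lt_succ_iff] at hyβ
    rcases lt_trichotomy x (ω * ω) with hx1 | hx1 | hx1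
    · -- Case 1 : x is a limit below ω²
      have hdvd : ω ∣ x := omega_dvd_of_limitlike x hx0 hxlim
      have hxq : ω * (x / ω) = x := by
        have h0 := Ordinal.div_add_mod x ω
        rwa [Ordinal.mod_eq_zero_of_dvd hdvd, add_zero] at h0
      have hqω : x / ω < ω := (Ordinal.div_lt omega0_ne_zero).2 hx1
      obtain ⟨nq, hnq⟩ := lt_omega0.1 hqω
      have hnq0 : nq ≠ 0 := by
        rintro rfl
        rw [Nat.cast_zero] at hnq
        rw [hnq, mul_zero] at hxq
        exact hx0 hxq.symm
      obtain ⟨k, rfl⟩ := Nat.exists_eq_succ_of_ne_zero hnq0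
      rw [hnq] at hxq
      have hxk : x = ω * ((k : Ordinal) + 1) := by
        rw [← hxq]
        norm_cast
      obtain ⟨u, huS, hugt⟩ := hcof (ω * (k : Ordinal)) (by
        rw [hxk]
        exact (mul_lt_mul_iff_right₀ omega0_pos).2 (lt_add_one _))
      have hux : u < x := huS.2
      have hum : ω * (k : Ordinal) + (u - ω * (k : Ordinal)) = u :=
        Ordinal.add_sub_cancel_of_le hugt.le
      have hm0 : u - ω * (k : Ordinal) ≠ 0 := by
        rintro h0
        rw [h0, add_zero] at hum
        exact hugt.ne' hum.symm
      have hmω : u - ω * (k : Ordinal) < ω := by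
        have h2 : ω * (k : Ordinal) + (u - ω * (k : Ordinal)) < ω * (k : Ordinal) + ω := by
          rw [hum]
          calc u < x := hux
          _ = ω * ((k : Ordinal) + 1) := hxk
          _ = ω * (k : Ordinal) + ω := by rw [mul_add, mul_one]
        exact (add_lt_add_iff_left _).1 h2
      have hbu : blkOf u = if Even k then Blk.SE else Blk.SO := by
        rw [← hum]
        exact blkOf_succ0 k _ hm0 hmω
      have hbx : blkOf x = if Even (k + 1) then Blk.LEv else Blk.LOv := by
        rw [hxk]
        exact blkOf_lim0 k
      apply blue u (hSsub huS) x hxX hux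
      by_cases hk : Even k
      · rw [hbu, hbx, if_pos hk, if_neg (by simpa [Nat.even_add_one] using hk)]
        rfl
      · rw [hbu, hbx, if_neg hk, if_pos (by simpa [Nat.even_add_one] using hk)]
        rfl
    · -- Case 2 : x = ω²
      have hbx : blkOf x = Blk.P := by rw [hx1]; exact blkOf_P
      have hyl : ω * ω < y := hx1 ▸ hxy
      have hz0x : z 0 < x := hzx 0
      rcases lt_trichotomy y (ω * ω * 2) with hy1 | hy1 | hy1
      · by_cases hdy : ω ∣ y
        · have hby : blkOf y = Blk.E := by rw [blkOf_mid y hyl hy1, if_pos hdy]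
          rcases blkOf_low (z 0) (hx1 ▸ hz0x) with hb | hb | hb | hb
          · exact blue (z 0) (hzX 0) x hxX hz0x (by rw [hb, hbx]; rfl)
          · exact blue (z 0) (hzX 0) x hxX hz0x (by rw [hb, hbx]; rfl)
          · exact blue (z 0) (hzX 0) y hyX (hz0x.trans hxy) (by rw [hb, hby]; rfl)
          · exact blue (z 0) (hzX 0) y hyX (hz0x.trans hxy) (by rw [hb, hby]; rfl)
        · have hby : blkOf y = Blk.D := by rw [blkOf_mid y hyl hy1, if_neg hdy]
          exact blue x hxX y hyX hxy (by rw [hbx, hby]; rfl)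
      · have hby : blkOf y = Blk.Q := by rw [hy1]; exact blkOf_Q
        exact blue x hxX y hyX hxy (by rw [hbx, hby]; rfl)
      · have hby : blkOf y = Blk.G := blkOf_G y hy1
        rcases blkOf_low (z 0) (hx1 ▸ hz0x) with hb | hb | hb | hb
        · exact blue (z 0) (hzX 0) x hxX hz0x (by rw [hb, hbx]; rfl)
        · exact blue (z 0) (hzX 0) x hxX hz0x (by rw [hb, hbx]; rfl)
        · exact blue (z 0) (hzX 0) y hyX (hz0x.trans hxy) (by rw [hb, hby]; rfl)
        · exact blue (z 0) (hzX 0) y hyX (hz0x.trans hxy) (by rw [hb, hby]; rfl)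
    · -- Case 3 : ω² < x
      rcases lt_trichotomy x (ω * ω * 2) with hx2 | hx2 | hx2
      · -- 3a : ω² < x < ω²·2
        have hdvd : ω ∣ x := omega_dvd_of_limitlike x hx0 hxlim
        have hxq : ω * (x / ω) = x := by
          have h0 := Ordinal.div_add_mod x ω
          rwa [Ordinal.mod_eq_zero_of_dvd hdvd, add_zero] at h0
        have hsup : ω < x / ω := by
          have h1 := hx1
          rw [← hxq] at h1
          exact (mul_lt_mul_iff_right₀ omega0_pos).1 h1
        have hslt : x / ω < ω * 2 := by
          apply (Ordinal.div_lt omega0_ne_zero).2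
          rwa [← mul_assoc]
        have hts : ω + (x / ω - ω) = x / ω := Ordinal.add_sub_cancel_of_le hsup.le
        have ht0 : x / ω - ω ≠ 0 := by
          rintro h0
          rw [h0, add_zero] at hts
          rw [← hts] at hxq
          exact hx1.ne hxq
        have htω : x / ω - ω < ω := by
          have h2 : ω + (x / ω - ω) < ω + ω := by
            rw [hts]
            calc x / ω < ω * 2 := hslt
            _ = ω + ω := by
              rw [show (2 : Ordinal) = 1 + 1 from one_add_one_eq_two.symm, mul_add, mul_one]
          exact (add_lt_add_iff_left _).1 h2
        obtain ⟨nt, hnt⟩ := lt_omega0.1 htω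
        have hnt0 : nt ≠ 0 := by
          rintro rfl
          rw [Nat.cast_zero] at hnt
          exact ht0 hnt
        obtain ⟨j, rfl⟩ := Nat.exists_eq_succ_of_ne_zero hnt0
        rw [hnt] at hts
        rw [← hts] at hxq
        have hxγ : x = ω * (ω + (j : Ordinal)) + ω := by
          rw [← hxq]
          push_cast
          rw [← add_assoc, mul_add, mul_one]
        have hγx : ω * (ω + (j : Ordinal)) < x := by
          rw [hxγ]
          exact lt_add_of_pos_right _ omega0_pos
        obtain ⟨u, huS, hugt⟩ := hcof _ hγx
        have hux : u < x := huS.2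
        have hum : ω * (ω + (j : Ordinal)) + (u - ω * (ω + (j : Ordinal))) = u :=
          Ordinal.add_sub_cancel_of_le hugt.le
        have hm0 : u - ω * (ω + (j : Ordinal)) ≠ 0 := by
          rintro h0
          rw [h0, add_zero] at hum
          exact hugt.ne' hum.symm
        have hmω : u - ω * (ω + (j : Ordinal)) < ω := by
          have h2 : ω * (ω + (j : Ordinal)) + (u - ω * (ω + (j : Ordinal))) <
              ω * (ω + (j : Ordinal)) + ω := by
            rw [hum, ← hxγ]
            exact hux
          exact (add_lt_add_iff_left _).1 h2
        have hmod : u % ω = u - ω * (ω + (j : Ordinal)) := by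
          conv_lhs => rw [← hum]
          rw [Ordinal.mul_add_mod_self, Ordinal.mod_eq_of_lt hmω]
        have hnd : ¬ ω ∣ u := by
          rw [Ordinal.dvd_iff_mod_eq_zero, hmod]
          exact hm0
        have hul : ω * ω < u := by
          calc ω * ω ≤ ω * (ω + (j : Ordinal)) := mul_le_mul_right le_self_add _
          _ < u := hugt
        have hbu : blkOf u = Blk.D := by rw [blkOf_mid u hul (hux.trans hx2), if_neg hnd]
        have hbx : blkOf x = Blk.E := by rw [blkOf_mid x hx1 hx2, if_pos hdvd]
        exact blue u (hSsub huS) x hxX hux (by rw [hbu, hbx]; rfl)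
      · -- 3b : x = ω²·2
        have hbx : blkOf x = Blk.Q := by rw [hx2]; exact blkOf_Q
        have hby : blkOf y = Blk.G := blkOf_G y (hx2 ▸ hxy)
        exact blue x hxX y hyX hxy (by rw [hbx, hby]; rfl)
      · -- 3c : ω²·2 < x, impossible since then x would be a successor
        have hxle : x < ω * ω * 2 + ω := lt_of_lt_of_le hxy hyβ'
        have hxm : ω * ω * 2 + (x - ω * ω * 2) = x := Ordinal.add_sub_cancel_of_le hx2.le
        have hm0 : x - ω * ω * 2 ≠ 0 := by
          rintro h0
          rw [h0, add_zero] at hxm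
          exact hx2.ne hxm
        have hmω : x - ω * ω * 2 < ω := by
          have h2 : ω * ω * 2 + (x - ω * ω * 2) < ω * ω * 2 + ω := by
            rw [hxm]
            exact hxle
          exact (add_lt_add_iff_left _).1 h2
        obtain ⟨n, hn⟩ := lt_omega0.1 hmω
        have hn0 : n ≠ 0 := by
          rintro rfl
          rw [Nat.cast_zero] at hn
          exact hm0 hn
        obtain ⟨j, rfl⟩ := Nat.exists_eq_succ_of_ne_zero hn0
        rw [hn] at hxm
        have hγ : (ω * ω * 2 + (j : Ordinal)) + 1 = x := by
          rw [← hxm]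
          push_cast
          rw [add_assoc]
        have hγlt : ω * ω * 2 + (j : Ordinal) < x := by
          rw [← hγ]
          exact lt_add_one (ω * ω * 2 + (j : Ordinal))
        have h2 := hxlim _ hγlt
        rw [hγ] at h2
        exact lt_irrefl _ h2
  · -- blue triple : contradiction with triangle-freeness
    obtain ⟨a, b, d, hab, had, hbd, rfl⟩ := Finset.card_eq_three.1 hcard
    have key : ∀ u v : Ordinal, u ∈ (↑({a, b, d} : Finset Ordinal) : Set Ordinal) →
        v ∈ (↑({a, b, d} : Finset Ordinal) : Set Ordinal) → u ≠ v →
        blkAdj (blkOf u) (blkOf v) = true := by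
      intro u v hu hv huv
      rcases huv.lt_or_gt with hlt | hlt
      · have h1 : (!(blkAdj (blkOf u) (blkOf v))) = false := hblue u hu v hv hlt
        simpa using h1
      · have h1 : (!(blkAdj (blkOf v) (blkOf u))) = false := hblue v hv u hu hlt
        rw [blkAdj_symm]
        simpa using h1
    exact blkAdj_tri _ _ _ (key a b (by simp) (by simp) hab)
      (key b d (by simp) (by simp) hbd) (key a d (by simp) (by simp) had)

end
end
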